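/- arXiv:1004.4721 — 3 statements merged into one kernel-verified Lean document; each statement's English description precedes it below -/
import Mathlib

section
/- Let R be an R-matrix on V⊗V, V = ℂ^N, let A be an associative unital ℂ-algebra, let η ∈ ℂ∖{0}, and let L, M ∈ Mat_N(A) be invertible matrices over A satisfying: (i) R₁L₁R₁L₁ = L₁R₁L₁R₁; (ii) R₁M₁R₁M₁ = M₁R₁M₁R₁; (iii) R₁L₁R₁M₁ = η·M₁R₁L₁R₁⁻¹. Then the matrix N' := M⁻¹ L M⁻¹ L⁻¹ M (i.e., N' = M⁻¹Q with Q = LM⁻¹L⁻¹M) satisfies: R₁N'₁R₁N'₁ = N'₁R₁N'₁R₁ and R₁⁻¹N'₁R₁M₁ = M₁R₁⁻¹N'₁R₁ in Mat_{N²}(A). -/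
open Matrix BigOperators

/-- `X₁ = X ⊗ id` acting on the factors 1,2 of `(ℂ^N)^{⊗3}`. -/
noncomputable def up12 {N : ℕ} (X : Matrix (Fin N × Fin N) (Fin N × Fin N) ℂ) :
    Matrix (Fin N × Fin N × Fin N) (Fin N × Fin N × Fin N) ℂ :=
  Matrix.of fun p q => X (p.1, p.2.1) (q.1, q.2.1) * (if p.2.2 = q.2.2 then 1 else 0)

/-- `X₂ = id ⊗ X` acting on the factors 2,3 of `(ℂ^N)^{⊗3}`. -/
noncomputable def up23 {N : ℕ} (X : Matrix (Fin N × Fin N) (Fin N × Fin N) ℂ) :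
    Matrix (Fin N × Fin N × Fin N) (Fin N × Fin N × Fin N) ℂ :=
  Matrix.of fun p q => (if p.1 = q.1 then 1 else 0) * X (p.2.1, p.2.2) (q.2.1, q.2.2)

/-- `X₁ = X ⊗ I_N` for a matrix with entries in an algebra `A`. -/
def lift1 {N : ℕ} {A : Type} [Ring A] (X : Matrix (Fin N) (Fin N) A) :
    Matrix (Fin N × Fin N) (Fin N × Fin N) A :=
  Matrix.of fun p q => X p.1 q.1 * (if p.2 = q.2 then 1 else 0)

lemma lift1_mul {N : ℕ} {A : Type} [Ring A] (X Y : Matrix (Fin N) (Fin N) A) :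
    lift1 (X * Y) = lift1 X * lift1 Y := by
  ext p q
  simp only [lift1, Matrix.mul_apply, Matrix.of_apply]
  rw [Fintype.sum_prod_type]
  simp [mul_ite, ite_mul, mul_zero, zero_mul, mul_one, one_mul, Finset.sum_ite_eq,
    Finset.sum_mul, mul_assoc]

lemma lift1_one {N : ℕ} {A : Type} [Ring A] :
    lift1 (1 : Matrix (Fin N) (Fin N) A) = 1 := by
  ext p q
  simp only [lift1, Matrix.of_apply, Matrix.one_apply, Prod.ext_iff]
  by_cases h1 : p.1 = q.1 <;> by_cases h2 : p.2 = q.2 <;> simp [h1, h2]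

lemma eta_cancel {B : Type*} [AddCommGroup B] [Module ℂ B] {η : ℂ} (hη : η ≠ 0)
    {x y : B} (h : η • x = η • y) : x = y := by
  have h2 := congrArg (fun z => η⁻¹ • z) h
  simpa [smul_smul, inv_mul_cancel₀ hη] using h2

lemma key_ring {B : Type*} [Ring B] [Algebra ℂ B] (η : ℂ) (hη : η ≠ 0)
    (r s L l M m : B)
    (hrs : r * s = 1) (hsr : s * r = 1)
    (hLl : L * l = 1) (hlL : l * L = 1)
    (hMm : M * m = 1) (hmM : m * M = 1)
    (hA : r * L * r * L = L * r * L * r)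
    (hB : r * M * r * M = M * r * M * r)
    (hC : r * L * r * M = η • (M * r * L * s)) :
    r * (m * (L * (m * (l * (M * (r * (m * (L * (m * (l * M)))))))))) =
      m * (L * (m * (l * (M * (r * (m * (L * (m * (l * (M * r)))))))))) ∧
    s * (m * (L * (m * (l * (M * (r * M)))))) =
      M * (s * (m * (L * (m * (l * (M * r)))))) := by
  have hinv_rs_t : ∀ t : B, r * (s * t) = t := fun t => by rw [← mul_assoc, hrs, one_mul]
  have hinv_rs_e : ∀ t : B, t * (r * s) = t := fun t => by rw [hrs, mul_one]
  have hinv_sr_t : ∀ t : B, s * (r * t) = t := fun t => by rw [← mul_assoc, hsr, one_mul]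
  have hinv_sr_e : ∀ t : B, t * (s * r) = t := fun t => by rw [hsr, mul_one]
  have hinv_Ll_t : ∀ t : B, L * (l * t) = t := fun t => by rw [← mul_assoc, hLl, one_mul]
  have hinv_Ll_e : ∀ t : B, t * (L * l) = t := fun t => by rw [hLl, mul_one]
  have hinv_lL_t : ∀ t : B, l * (L * t) = t := fun t => by rw [← mul_assoc, hlL, one_mul]
  have hinv_lL_e : ∀ t : B, t * (l * L) = t := fun t => by rw [hlL, mul_one]
  have hinv_Mm_t : ∀ t : B, M * (m * t) = t := fun t => by rw [← mul_assoc, hMm, one_mul]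
  have hinv_Mm_e : ∀ t : B, t * (M * m) = t := fun t => by rw [hMm, mul_one]
  have hinv_mM_t : ∀ t : B, m * (M * t) = t := fun t => by rw [← mul_assoc, hmM, one_mul]
  have hinv_mM_e : ∀ t : B, t * (m * M) = t := fun t => by rw [hmM, mul_one]

  have h_A_r : r * (L * (r * (L))) = L * (r * (L * (r))) := by simpa only [mul_assoc] using hA
  have h_A_t : ∀ t : B, r * (L * (r * (L * (t)))) = L * (r * (L * (r * (t)))) := fun t => by
    have hzz := congrArg (fun z => z * t) h_A_r
    simpa only [mul_assoc, smul_mul_assoc] using hzz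

  have h_B_r : r * (M * (r * (M))) = M * (r * (M * (r))) := by simpa only [mul_assoc] using hB
  have h_B_t : ∀ t : B, r * (M * (r * (M * (t)))) = M * (r * (M * (r * (t)))) := fun t => by
    have hzz := congrArg (fun z => z * t) h_B_r
    simpa only [mul_assoc, smul_mul_assoc] using hzz

  have h_C_r : r * (L * (r * (M))) = η • (M * (r * (L * (s)))) := by simpa only [mul_assoc] using hC
  have h_C_t : ∀ t : B, r * (L * (r * (M * (t)))) = η • (M * (r * (L * (s * (t))))) := fun t => by
    have hzz := congrArg (fun z => z * t) h_C_r
    simpa only [mul_assoc, smul_mul_assoc] using hzz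

  have h_LrMr_sMrL_r : L * (r * (M * (r))) = η • (s * (M * (r * (L)))) := by
    calc L * (r * (M * (r))) 
    _ = s * (r * (L * (r * (M * (r))))) := Eq.symm (by
        conv_lhs => rw [hinv_sr_t (L * (r * (M * (r))))])
    _ = (η) • (s * (M * (r * (L * (s * (r)))))) := by
      conv_lhs => rw [h_C_t (r)]
      simp only [mul_smul_comm, smul_smul]
    _ = (η) • (s * (M * (r * (L)))) := by
      conv_lhs => rw [hinv_sr_e (L)]
  have h_LrMr_sMrL_t : ∀ t : B, L * (r * (M * (r * (t)))) = η • (s * (M * (r * (L * (t))))) := fun t => by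
    have hzz := congrArg (fun z => z * t) h_LrMr_sMrL_r
    simpa only [mul_assoc, smul_mul_assoc] using hzz

  have h_Lrls_slrL_r : L * (r * (l * (s))) = s * (l * (r * (L))) := by
    calc L * (r * (l * (s))) 
    _ = s * (r * (L * (r * (l * (s))))) := Eq.symm (by
        conv_lhs => rw [hinv_sr_t (L * (r * (l * (s))))])
    _ = s * (l * (L * (r * (L * (r * (l * (s))))))) := Eq.symm (by
        conv_lhs => rw [hinv_lL_t (r * (L * (r * (l * (s)))))])
    _ = s * (l * (r * (L * (r * (L * (l * (s))))))) := by
      conv_lhs => rw [← h_A_t (l * (s))]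
    _ = s * (l * (r * (L * (r * (s))))) := by
      conv_lhs => rw [hinv_Ll_t (s)]
    _ = s * (l * (r * (L))) := by
      conv_lhs => rw [hinv_rs_e (L)]
  have h_Lrls_slrL_t : ∀ t : B, L * (r * (l * (s * (t)))) = s * (l * (r * (L * (t)))) := fun t => by
    have hzz := congrArg (fun z => z * t) h_Lrls_slrL_r
    simpa only [mul_assoc, smul_mul_assoc] using hzz

  have h_MrMs_sMrM_r : M * (r * (M * (s))) = s * (M * (r * (M))) := by
    calc M * (r * (M * (s))) 
    _ = s * (r * (M * (r * (M * (s))))) := Eq.symm (by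
        conv_lhs => rw [hinv_sr_t (M * (r * (M * (s))))])
    _ = s * (M * (r * (M * (r * (s))))) := by
      conv_lhs => rw [h_B_t (s)]
    _ = s * (M * (r * (M))) := by
      conv_lhs => rw [hinv_rs_e (M)]
  have h_MrMs_sMrM_t : ∀ t : B, M * (r * (M * (s * (t)))) = s * (M * (r * (M * (t)))) := fun t => by
    have hzz := congrArg (fun z => z * t) h_MrMs_sMrM_r
    simpa only [mul_assoc, smul_mul_assoc] using hzz

  have h_lrLr_rLrl_r : l * (r * (L * (r))) = r * (L * (r * (l))) := by
    calc l * (r * (L * (r))) 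
    _ = l * (r * (L * (r * (L * (l))))) := Eq.symm (by
        conv_lhs => rw [hinv_Ll_e (r)])
    _ = l * (L * (r * (L * (r * (l))))) := by
      conv_lhs => rw [h_A_t (l)]
    _ = r * (L * (r * (l))) := by
      conv_lhs => rw [hinv_lL_t (r * (L * (r * (l))))]
  have h_lrLr_rLrl_t : ∀ t : B, l * (r * (L * (r * (t)))) = r * (L * (r * (l * (t)))) := fun t => by
    have hzz := congrArg (fun z => z * t) h_lrLr_rLrl_r
    simpa only [mul_assoc, smul_mul_assoc] using hzz

  have h_lsls_slsl_r : l * (s * (l * (s))) = s * (l * (s * (l))) := by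
    calc l * (s * (l * (s))) 
    _ = s * (r * (l * (s * (l * (s))))) := Eq.symm (by
        conv_lhs => rw [hinv_sr_t (l * (s * (l * (s))))])
    _ = s * (l * (L * (r * (l * (s * (l * (s))))))) := Eq.symm (by
        conv_lhs => rw [hinv_lL_t (r * (l * (s * (l * (s)))))])
    _ = s * (l * (s * (r * (L * (r * (l * (s * (l * (s))))))))) := Eq.symm (by
        conv_lhs => rw [hinv_sr_t (L * (r * (l * (s * (l * (s))))))])
    _ = s * (l * (s * (l * (L * (r * (L * (r * (l * (s * (l * (s))))))))))) := Eq.symm (by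
        conv_lhs => rw [hinv_lL_t (r * (L * (r * (l * (s * (l * (s)))))))])
    _ = s * (l * (s * (l * (r * (L * (r * (L * (l * (s * (l * (s))))))))))) := by
      conv_lhs => rw [← h_A_t (l * (s * (l * (s))))]
    _ = s * (l * (s * (l * (r * (L * (r * (s * (l * (s))))))))) := by
      conv_lhs => rw [hinv_Ll_t (s * (l * (s)))]
    _ = s * (l * (s * (l * (r * (L * (l * (s))))))) := by
      conv_lhs => rw [hinv_rs_t (l * (s))]
    _ = s * (l * (s * (l * (r * (s))))) := by
      conv_lhs => rw [hinv_Ll_t (s)]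
    _ = s * (l * (s * (l))) := by
      conv_lhs => rw [hinv_rs_e (l)]
  have h_lsls_slsl_t : ∀ t : B, l * (s * (l * (s * (t)))) = s * (l * (s * (l * (t)))) := fun t => by
    have hzz := congrArg (fun z => z * t) h_lsls_slsl_r
    simpa only [mul_assoc, smul_mul_assoc] using hzz

  have h_lsmr_smsl_r : l * (s * (m * (r))) = η • (s * (m * (s * (l)))) := by
    calc l * (s * (m * (r))) 
    _ = l * (s * (m * (r * (L * (l))))) := Eq.symm (by
        conv_lhs => rw [hinv_Ll_e (r)])
    _ = l * (s * (m * (r * (L * (r * (s * (l))))))) := Eq.symm (by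
        conv_lhs => rw [hinv_rs_t (l)])
    _ = l * (s * (m * (r * (L * (r * (M * (m * (s * (l))))))))) := Eq.symm (by
        conv_lhs => rw [hinv_Mm_t (s * (l))])
    _ = (η) • (l * (s * (m * (M * (r * (L * (s * (m * (s * (l)))))))))) := by
      conv_lhs => rw [h_C_t (m * (s * (l)))]
      simp only [mul_smul_comm, smul_smul]
    _ = (η) • (l * (s * (r * (L * (s * (m * (s * (l)))))))) := by
      conv_lhs => rw [hinv_mM_t (r * (L * (s * (m * (s * (l))))))]
    _ = (η) • (l * (L * (s * (m * (s * (l)))))) := by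
      conv_lhs => rw [hinv_sr_t (L * (s * (m * (s * (l)))))]
    _ = (η) • (s * (m * (s * (l)))) := by
      conv_lhs => rw [hinv_lL_t (s * (m * (s * (l))))]
  have h_lsmr_smsl_t : ∀ t : B, l * (s * (m * (r * (t)))) = η • (s * (m * (s * (l * (t))))) := fun t => by
    have hzz := congrArg (fun z => z * t) h_lsmr_smsl_r
    simpa only [mul_assoc, smul_mul_assoc] using hzz

  have h_mrLr_rLsm_r : m * (r * (L * (r))) = η • (r * (L * (s * (m)))) := by
    calc m * (r * (L * (r))) 
    _ = m * (r * (L * (r * (M * (m))))) := Eq.symm (by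
        conv_lhs => rw [hinv_Mm_e (r)])
    _ = (η) • (m * (M * (r * (L * (s * (m)))))) := by
      conv_lhs => rw [h_C_t (m)]
      simp only [mul_smul_comm, smul_smul]
    _ = (η) • (r * (L * (s * (m)))) := by
      conv_lhs => rw [hinv_mM_t (r * (L * (s * (m))))]
  have h_mrLr_rLsm_t : ∀ t : B, m * (r * (L * (r * (t)))) = η • (r * (L * (s * (m * (t))))) := fun t => by
    have hzz := congrArg (fun z => z * t) h_mrLr_rLsm_r
    simpa only [mul_assoc, smul_mul_assoc] using hzz

  have h_mrMr_rMrm_r : m * (r * (M * (r))) = r * (M * (r * (m))) := by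
    calc m * (r * (M * (r))) 
    _ = m * (r * (M * (r * (M * (m))))) := Eq.symm (by
        conv_lhs => rw [hinv_Mm_e (r)])
    _ = m * (M * (r * (M * (r * (m))))) := by
      conv_lhs => rw [h_B_t (m)]
    _ = r * (M * (r * (m))) := by
      conv_lhs => rw [hinv_mM_t (r * (M * (r * (m))))]
  have h_mrMr_rMrm_t : ∀ t : B, m * (r * (M * (r * (t)))) = r * (M * (r * (m * (t)))) := fun t => by
    have hzz := congrArg (fun z => z * t) h_mrMr_rMrm_r
    simpa only [mul_assoc, smul_mul_assoc] using hzz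

  have h_msMr_rMsm_r : m * (s * (M * (r))) = r * (M * (s * (m))) := by
    calc m * (s * (M * (r))) 
    _ = m * (s * (M * (r * (M * (m))))) := Eq.symm (by
        conv_lhs => rw [hinv_Mm_e (r)])
    _ = m * (s * (M * (r * (M * (r * (s * (m))))))) := Eq.symm (by
        conv_lhs => rw [hinv_rs_t (m)])
    _ = m * (s * (r * (M * (r * (M * (s * (m))))))) := by
      conv_lhs => rw [← h_B_t (s * (m))]
    _ = m * (M * (r * (M * (s * (m))))) := by
      conv_lhs => rw [hinv_sr_t (M * (r * (M * (s * (m)))))]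
    _ = r * (M * (s * (m))) := by
      conv_lhs => rw [hinv_mM_t (r * (M * (s * (m))))]
  have h_msMr_rMsm_t : ∀ t : B, m * (s * (M * (r * (t)))) = r * (M * (s * (m * (t)))) := fun t => by
    have hzz := congrArg (fun z => z * t) h_msMr_rMsm_r
    simpa only [mul_assoc, smul_mul_assoc] using hzz

  have h_msmr_rmsm_r : m * (s * (m * (r))) = r * (m * (s * (m))) := by
    calc m * (s * (m * (r))) 
    _ = m * (s * (m * (r * (M * (m))))) := Eq.symm (by
        conv_lhs => rw [hinv_Mm_e (r)])
    _ = m * (s * (m * (r * (M * (r * (s * (m))))))) := Eq.symm (by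
        conv_lhs => rw [hinv_rs_t (m)])
    _ = m * (s * (m * (r * (M * (r * (M * (m * (s * (m))))))))) := Eq.symm (by
        conv_lhs => rw [hinv_Mm_t (s * (m))])
    _ = m * (s * (m * (M * (r * (M * (r * (m * (s * (m))))))))) := by
      conv_lhs => rw [h_B_t (m * (s * (m)))]
    _ = m * (s * (r * (M * (r * (m * (s * (m))))))) := by
      conv_lhs => rw [hinv_mM_t (r * (M * (r * (m * (s * (m))))))]
    _ = m * (M * (r * (m * (s * (m))))) := by
      conv_lhs => rw [hinv_sr_t (M * (r * (m * (s * (m)))))]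
    _ = r * (m * (s * (m))) := by
      conv_lhs => rw [hinv_mM_t (r * (m * (s * (m))))]
  have h_msmr_rmsm_t : ∀ t : B, m * (s * (m * (r * (t)))) = r * (m * (s * (m * (t)))) := fun t => by
    have hzz := congrArg (fun z => z * t) h_msmr_rmsm_r
    simpa only [mul_assoc, smul_mul_assoc] using hzz

  have h_msms_smsm_r : m * (s * (m * (s))) = s * (m * (s * (m))) := by
    calc m * (s * (m * (s))) 
    _ = s * (r * (m * (s * (m * (s))))) := Eq.symm (by
        conv_lhs => rw [hinv_sr_t (m * (s * (m * (s))))])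
    _ = s * (m * (M * (r * (m * (s * (m * (s))))))) := Eq.symm (by
        conv_lhs => rw [hinv_mM_t (r * (m * (s * (m * (s)))))])
    _ = s * (m * (s * (r * (M * (r * (m * (s * (m * (s))))))))) := Eq.symm (by
        conv_lhs => rw [hinv_sr_t (M * (r * (m * (s * (m * (s))))))])
    _ = s * (m * (s * (m * (M * (r * (M * (r * (m * (s * (m * (s))))))))))) := Eq.symm (by
        conv_lhs => rw [hinv_mM_t (r * (M * (r * (m * (s * (m * (s)))))))])
    _ = s * (m * (s * (m * (r * (M * (r * (M * (m * (s * (m * (s))))))))))) := by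
      conv_lhs => rw [← h_B_t (m * (s * (m * (s))))]
    _ = s * (m * (s * (m * (r * (M * (r * (s * (m * (s))))))))) := by
      conv_lhs => rw [hinv_Mm_t (s * (m * (s)))]
    _ = s * (m * (s * (m * (r * (M * (m * (s))))))) := by
      conv_lhs => rw [hinv_rs_t (m * (s))]
    _ = s * (m * (s * (m * (r * (s))))) := by
      conv_lhs => rw [hinv_Mm_t (s)]
    _ = s * (m * (s * (m))) := by
      conv_lhs => rw [hinv_rs_e (m)]
  have h_msms_smsm_t : ∀ t : B, m * (s * (m * (s * (t)))) = s * (m * (s * (m * (t)))) := fun t => by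
    have hzz := congrArg (fun z => z * t) h_msms_smsm_r
    simpa only [mul_assoc, smul_mul_assoc] using hzz

  have h_rMrl_lsMr_r : r * (M * (r * (l))) = η • (l * (s * (M * (r)))) := by
    calc r * (M * (r * (l))) 
    _ = l * (L * (r * (M * (r * (l))))) := Eq.symm (by
        conv_lhs => rw [hinv_lL_t (r * (M * (r * (l))))])
    _ = l * (s * (r * (L * (r * (M * (r * (l))))))) := Eq.symm (by
        conv_lhs => rw [hinv_sr_t (L * (r * (M * (r * (l)))))])
    _ = (η) • (l * (s * (M * (r * (L * (s * (r * (l)))))))) := by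
      conv_lhs => rw [h_C_t (r * (l))]
      simp only [mul_smul_comm, smul_smul]
    _ = (η) • (l * (s * (M * (r * (L * (l)))))) := by
      conv_lhs => rw [hinv_sr_t (l)]
    _ = (η) • (l * (s * (M * (r)))) := by
      conv_lhs => rw [hinv_Ll_e (r)]
  have h_rMrl_lsMr_t : ∀ t : B, r * (M * (r * (l * (t)))) = η • (l * (s * (M * (r * (t))))) := fun t => by
    have hzz := congrArg (fun z => z * t) h_rMrl_lsMr_r
    simpa only [mul_assoc, smul_mul_assoc] using hzz

  have h_rlsm_msls_r : r * (l * (s * (m))) = η • (m * (s * (l * (s)))) := by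
    calc r * (l * (s * (m))) 
    _ = r * (l * (s * (m * (r * (s))))) := Eq.symm (by
        conv_lhs => rw [hinv_rs_e (m)])
    _ = r * (l * (s * (m * (r * (L * (l * (s))))))) := Eq.symm (by
        conv_lhs => rw [hinv_Ll_t (s)])
    _ = r * (l * (s * (m * (r * (L * (r * (s * (l * (s))))))))) := Eq.symm (by
        conv_lhs => rw [hinv_rs_t (l * (s))])
    _ = r * (l * (s * (m * (r * (L * (r * (M * (m * (s * (l * (s))))))))))) := Eq.symm (by
        conv_lhs => rw [hinv_Mm_t (s * (l * (s)))])
    _ = (η) • (r * (l * (s * (m * (M * (r * (L * (s * (m * (s * (l * (s)))))))))))) := by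
      conv_lhs => rw [h_C_t (m * (s * (l * (s))))]
      simp only [mul_smul_comm, smul_smul]
    _ = (η) • (r * (l * (s * (r * (L * (s * (m * (s * (l * (s)))))))))) := by
      conv_lhs => rw [hinv_mM_t (r * (L * (s * (m * (s * (l * (s)))))))]
    _ = (η) • (r * (l * (L * (s * (m * (s * (l * (s)))))))) := by
      conv_lhs => rw [hinv_sr_t (L * (s * (m * (s * (l * (s))))))]
    _ = (η) • (r * (s * (m * (s * (l * (s)))))) := by
      conv_lhs => rw [hinv_lL_t (s * (m * (s * (l * (s)))))]
    _ = (η) • (m * (s * (l * (s)))) := by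
      conv_lhs => rw [hinv_rs_t (m * (s * (l * (s))))]
  have h_rlsm_msls_t : ∀ t : B, r * (l * (s * (m * (t)))) = η • (m * (s * (l * (s * (t))))) := fun t => by
    have hzz := congrArg (fun z => z * t) h_rlsm_msls_r
    simpa only [mul_assoc, smul_mul_assoc] using hzz

  have h_smrL_Lsms_r : s * (m * (r * (L))) = η • (L * (s * (m * (s)))) := by
    calc s * (m * (r * (L))) 
    _ = s * (m * (r * (L * (r * (s))))) := Eq.symm (by
        conv_lhs => rw [hinv_rs_e (L)])
    _ = s * (m * (r * (L * (r * (M * (m * (s))))))) := Eq.symm (by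
        conv_lhs => rw [hinv_Mm_t (s)])
    _ = (η) • (s * (m * (M * (r * (L * (s * (m * (s)))))))) := by
      conv_lhs => rw [h_C_t (m * (s))]
      simp only [mul_smul_comm, smul_smul]
    _ = (η) • (s * (r * (L * (s * (m * (s)))))) := by
      conv_lhs => rw [hinv_mM_t (r * (L * (s * (m * (s)))))]
    _ = (η) • (L * (s * (m * (s)))) := by
      conv_lhs => rw [hinv_sr_t (L * (s * (m * (s))))]
  have h_smrL_Lsms_t : ∀ t : B, s * (m * (r * (L * (t)))) = η • (L * (s * (m * (s * (t))))) := fun t => by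
    have hzz := congrArg (fun z => z * t) h_smrL_Lsms_r
    simpa only [mul_assoc, smul_mul_assoc] using hzz

  refine ⟨?_, ?_⟩
  ·
    calc r * (m * (L * (m * (l * (M * (r * (m * (L * (m * (l * (M))))))))))) 
    _ = r * (m * (L * (m * (l * (s * (r * (M * (r * (m * (L * (m * (l * (M))))))))))))) := Eq.symm (by
        conv_lhs => rw [hinv_sr_t (M * (r * (m * (L * (m * (l * (M)))))))])
    _ = r * (m * (L * (m * (l * (s * (r * (M * (r * (m * (L * (s * (r * (m * (l * (M))))))))))))))) := Eq.symm (by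
        conv_lhs => rw [hinv_sr_t (m * (l * (M)))])
    _ = r * (m * (L * (m * (l * (s * (m * (r * (M * (r * (L * (s * (r * (m * (l * (M))))))))))))))) := by
      conv_lhs => rw [← h_mrMr_rMrm_t (L * (s * (r * (m * (l * (M))))))]
    _ = (η) • (r * (m * (L * (m * (s * (m * (s * (l * (M * (r * (L * (s * (r * (m * (l * (M)))))))))))))))) := by
      conv_lhs => rw [h_lsmr_smsl_t (M * (r * (L * (s * (r * (m * (l * (M))))))))]
      simp only [mul_smul_comm, smul_smul]
    _ = (η) • (r * (m * (L * (s * (m * (s * (m * (l * (M * (r * (L * (s * (r * (m * (l * (M)))))))))))))))) := by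
      conv_lhs => rw [h_msms_smsm_t (l * (M * (r * (L * (s * (r * (m * (l * (M)))))))))]
    _ = r * (m * (L * (s * (m * (s * (m * (l * (r * (L * (r * (M * (r * (m * (l * (M))))))))))))))) := Eq.symm (by
        conv_lhs => rw [h_C_t (r * (m * (l * (M))))]
        simp only [mul_smul_comm, smul_smul])
    _ = r * (m * (L * (s * (m * (s * (m * (r * (L * (r * (l * (M * (r * (m * (l * (M))))))))))))))) := by
      conv_lhs => rw [h_lrLr_rLrl_t (M * (r * (m * (l * (M)))))]
    _ = (η) • (r * (m * (L * (s * (m * (s * (r * (L * (s * (m * (l * (M * (r * (m * (l * (M)))))))))))))))) := by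
      conv_lhs => rw [h_mrLr_rLsm_t (l * (M * (r * (m * (l * (M))))))]
      simp only [mul_smul_comm, smul_smul]
    _ = r * (m * (s * (m * (r * (L * (r * (L * (s * (m * (l * (M * (r * (m * (l * (M))))))))))))))) := Eq.symm (by
        conv_lhs => rw [h_smrL_Lsms_t (r * (L * (s * (m * (l * (M * (r * (m * (l * (M))))))))))]
        simp only [mul_smul_comm, smul_smul])
    _ = r * (m * (s * (m * (L * (r * (L * (r * (s * (m * (l * (M * (r * (m * (l * (M))))))))))))))) := by
      conv_lhs => rw [h_A_t (s * (m * (l * (M * (r * (m * (l * (M))))))))]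
    _ = r * (m * (s * (m * (L * (r * (L * (m * (l * (M * (r * (m * (l * (M))))))))))))) := by
      conv_lhs => rw [hinv_rs_t (m * (l * (M * (r * (m * (l * (M)))))))]
    _ = r * (m * (s * (m * (L * (m * (M * (r * (L * (m * (l * (M * (r * (m * (l * (M))))))))))))))) := Eq.symm (by
        conv_lhs => rw [hinv_mM_t (r * (L * (m * (l * (M * (r * (m * (l * (M)))))))))])
    _ = m * (s * (m * (r * (L * (m * (M * (r * (L * (m * (l * (M * (r * (m * (l * (M))))))))))))))) := by
      conv_lhs => rw [← h_msmr_rmsm_t (L * (m * (M * (r * (L * (m * (l * (M * (r * (m * (l * (M))))))))))))]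
    _ = (η) • (m * (L * (s * (m * (s * (m * (M * (r * (L * (m * (l * (M * (r * (m * (l * (M)))))))))))))))) := by
      conv_lhs => rw [h_smrL_Lsms_t (m * (M * (r * (L * (m * (l * (M * (r * (m * (l * (M)))))))))))]
      simp only [mul_smul_comm, smul_smul]
    _ = (η) • (m * (L * (m * (s * (m * (s * (M * (r * (L * (m * (l * (M * (r * (m * (l * (M)))))))))))))))) := by
      conv_lhs => rw [← h_msms_smsm_t (M * (r * (L * (m * (l * (M * (r * (m * (l * (M))))))))))]
    _ = m * (L * (m * (s * (m * (L * (r * (M * (r * (m * (l * (M * (r * (m * (l * (M))))))))))))))) := Eq.symm (by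
        conv_lhs => rw [h_LrMr_sMrL_t (m * (l * (M * (r * (m * (l * (M)))))))]
        simp only [mul_smul_comm, smul_smul])
    _ = m * (L * (m * (s * (m * (L * (m * (r * (M * (r * (l * (M * (r * (m * (l * (M))))))))))))))) := by
      conv_lhs => rw [← h_mrMr_rMrm_t (l * (M * (r * (m * (l * (M))))))]
    _ = (η) • (m * (L * (m * (s * (m * (L * (m * (l * (s * (M * (r * (M * (r * (m * (l * (M)))))))))))))))) := by
      conv_lhs => rw [h_rMrl_lsMr_t (M * (r * (m * (l * (M)))))]
      simp only [mul_smul_comm, smul_smul]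
    _ = (η) • (m * (L * (m * (s * (m * (L * (m * (l * (s * (r * (M * (r * (M * (m * (l * (M)))))))))))))))) := by
      conv_lhs => rw [← h_B_t (m * (l * (M)))]
    _ = (η) • (m * (L * (m * (s * (m * (L * (m * (l * (s * (r * (M * (r * (l * (M)))))))))))))) := by
      conv_lhs => rw [hinv_Mm_t (l * (M))]
    _ = (η) • (m * (L * (m * (s * (m * (L * (m * (l * (s * (r * (M * (r * (l * (M * (s * (r)))))))))))))))) := Eq.symm (by
        conv_lhs => rw [hinv_sr_e (M)])
    _ = (η * η) • (m * (L * (m * (s * (m * (L * (m * (l * (s * (l * (s * (M * (r * (M * (s * (r)))))))))))))))) := by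
      conv_lhs => rw [h_rMrl_lsMr_t (M * (s * (r)))]
      simp only [mul_smul_comm, smul_smul]
    _ = (η * η) • (m * (L * (m * (s * (m * (L * (m * (l * (s * (l * (s * (s * (M * (r * (M * (r)))))))))))))))) := by
      conv_lhs => rw [h_MrMs_sMrM_t (r)]
    _ = (η * η) • (m * (L * (m * (s * (m * (L * (m * (s * (l * (s * (l * (s * (M * (r * (M * (r)))))))))))))))) := by
      conv_lhs => rw [h_lsls_slsl_t (s * (M * (r * (M * (r)))))]
    _ = (η) • (m * (L * (m * (s * (m * (L * (m * (s * (l * (s * (r * (M * (r * (l * (M * (r)))))))))))))))) := Eq.symm (by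
        conv_lhs => rw [h_rMrl_lsMr_t (M * (r))]
        simp only [mul_smul_comm, smul_smul])
    _ = m * (L * (m * (s * (m * (L * (r * (l * (s * (m * (r * (M * (r * (l * (M * (r))))))))))))))) := Eq.symm (by
        conv_lhs => rw [h_rlsm_msls_t (r * (M * (r * (l * (M * (r))))))]
        simp only [mul_smul_comm, smul_smul])
    _ = m * (L * (m * (s * (m * (L * (r * (l * (s * (r * (M * (r * (m * (l * (M * (r))))))))))))))) := by
      conv_lhs => rw [h_mrMr_rMrm_t (l * (M * (r)))]
    _ = m * (L * (m * (s * (m * (s * (l * (r * (L * (r * (M * (r * (m * (l * (M * (r))))))))))))))) := by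
      conv_lhs => rw [h_Lrls_slrL_t (r * (M * (r * (m * (l * (M * (r)))))))]
    _ = (η) • (m * (L * (m * (s * (m * (s * (l * (r * (s * (M * (r * (L * (m * (l * (M * (r)))))))))))))))) := by
      conv_lhs => rw [h_LrMr_sMrL_t (m * (l * (M * (r))))]
      simp only [mul_smul_comm, smul_smul]
    _ = (η) • (m * (L * (m * (s * (m * (s * (l * (M * (r * (L * (m * (l * (M * (r)))))))))))))) := by
      conv_lhs => rw [hinv_rs_t (M * (r * (L * (m * (l * (M * (r)))))))]
    _ = m * (L * (m * (l * (s * (m * (r * (M * (r * (L * (m * (l * (M * (r))))))))))))) := Eq.symm (by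
        conv_lhs => rw [h_lsmr_smsl_t (M * (r * (L * (m * (l * (M * (r)))))))]
        simp only [mul_smul_comm, smul_smul])
    _ = m * (L * (m * (l * (s * (r * (M * (r * (m * (L * (m * (l * (M * (r))))))))))))) := by
      conv_lhs => rw [h_mrMr_rMrm_t (L * (m * (l * (M * (r)))))]
    _ = m * (L * (m * (l * (M * (r * (m * (L * (m * (l * (M * (r))))))))))) := by
      conv_lhs => rw [hinv_sr_t (M * (r * (m * (L * (m * (l * (M * (r))))))))]
  · apply eta_cancel hη
    calc (η) • (s * (m * (L * (m * (l * (M * (r * (M)))))))) 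
    _ = (η) • (s * (m * (L * (m * (l * (s * (r * (M * (r * (M)))))))))) := Eq.symm (by
        conv_lhs => rw [hinv_sr_t (M * (r * (M)))])
    _ = (η) • (s * (m * (L * (m * (l * (s * (M * (r * (M * (r)))))))))) := by
      conv_lhs => rw [h_B_r]
    _ = s * (m * (L * (m * (r * (M * (r * (l * (M * (r))))))))) := Eq.symm (by
        conv_lhs => rw [h_rMrl_lsMr_t (M * (r))]
        simp only [mul_smul_comm, smul_smul])
    _ = s * (m * (L * (r * (M * (r * (m * (l * (M * (r))))))))) := by
      conv_lhs => rw [h_mrMr_rMrm_t (l * (M * (r)))]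
    _ = (η) • (s * (m * (s * (M * (r * (L * (m * (l * (M * (r)))))))))) := by
      conv_lhs => rw [h_LrMr_sMrL_t (m * (l * (M * (r))))]
      simp only [mul_smul_comm, smul_smul]
    _ = (η) • (s * (r * (M * (s * (m * (L * (m * (l * (M * (r)))))))))) := by
      conv_lhs => rw [h_msMr_rMsm_t (L * (m * (l * (M * (r)))))]
    _ = (η) • (M * (s * (m * (L * (m * (l * (M * (r)))))))) := by
      conv_lhs => rw [hinv_sr_t (M * (s * (m * (L * (m * (l * (M * (r))))))))]

/-- In the right-invariant braided differential algebra built from two copies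
of the reflection equation algebra, the matrix `N' = M⁻¹ L M⁻¹ L⁻¹ M = M⁻¹Q`
satisfies the reflection equation and the twisted commutation relation:
`R₁N'₁R₁N'₁ = N'₁R₁N'₁R₁` and `R₁⁻¹N'₁R₁M₁ = M₁R₁⁻¹N'₁R₁`. -/
theorem adjoint_subalgebra_Nmat (N : ℕ) (hN : 1 ≤ N)
    (R Rinv : Matrix (Fin N × Fin N) (Fin N × Fin N) ℂ)
    (hYB : up12 R * up23 R * up12 R = up23 R * up12 R * up23 R)
    (hRinv : R * Rinv = 1 ∧ Rinv * R = 1)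
    (A : Type) [Ring A] [Algebra ℂ A] (η : ℂ) (hη : η ≠ 0)
    (L M Linv Minv : Matrix (Fin N) (Fin N) A)
    (hL : L * Linv = 1 ∧ Linv * L = 1)
    (hM : M * Minv = 1 ∧ Minv * M = 1)
    (hREL : R.map (algebraMap ℂ A) * lift1 L * R.map (algebraMap ℂ A) * lift1 L
        = lift1 L * R.map (algebraMap ℂ A) * lift1 L * R.map (algebraMap ℂ A))
    (hREM : R.map (algebraMap ℂ A) * lift1 M * R.map (algebraMap ℂ A) * lift1 M
        = lift1 M * R.map (algebraMap ℂ A) * lift1 M * R.map (algebraMap ℂ A))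
    (hOFP : R.map (algebraMap ℂ A) * lift1 L * R.map (algebraMap ℂ A) * lift1 M
        = algebraMap ℂ A η
            • (lift1 M * R.map (algebraMap ℂ A) * lift1 L * Rinv.map (algebraMap ℂ A))) :
    (R.map (algebraMap ℂ A) * lift1 (Minv * L * Minv * Linv * M) * R.map (algebraMap ℂ A)
          * lift1 (Minv * L * Minv * Linv * M)
        = lift1 (Minv * L * Minv * Linv * M) * R.map (algebraMap ℂ A)
          * lift1 (Minv * L * Minv * Linv * M) * R.map (algebraMap ℂ A))
      ∧ (Rinv.map (algebraMap ℂ A) * lift1 (Minv * L * Minv * Linv * M)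
            * R.map (algebraMap ℂ A) * lift1 M
          = lift1 M * Rinv.map (algebraMap ℂ A) * lift1 (Minv * L * Minv * Linv * M)
            * R.map (algebraMap ℂ A)) := by
  have hrs : R.map (algebraMap ℂ A) * Rinv.map (algebraMap ℂ A) = 1 := by
    rw [← Matrix.map_mul, hRinv.1, Matrix.map_one _ (map_zero _) (map_one _)]
  have hsr : Rinv.map (algebraMap ℂ A) * R.map (algebraMap ℂ A) = 1 := by
    rw [← Matrix.map_mul, hRinv.2, Matrix.map_one _ (map_zero _) (map_one _)]
  have hLl : lift1 L * lift1 Linv = 1 := by rw [← lift1_mul, hL.1, lift1_one]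
  have hlL : lift1 Linv * lift1 L = 1 := by rw [← lift1_mul, hL.2, lift1_one]
  have hMm : lift1 M * lift1 Minv = 1 := by rw [← lift1_mul, hM.1, lift1_one]
  have hmM : lift1 Minv * lift1 M = 1 := by rw [← lift1_mul, hM.2, lift1_one]
  have hC : R.map (algebraMap ℂ A) * lift1 L * R.map (algebraMap ℂ A) * lift1 M
      = η • (lift1 M * R.map (algebraMap ℂ A) * lift1 L * Rinv.map (algebraMap ℂ A)) := by
    rw [hOFP, algebraMap_smul]
  have key := key_ring η hη (R.map (algebraMap ℂ A)) (Rinv.map (algebraMap ℂ A))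
    (lift1 L) (lift1 Linv) (lift1 M) (lift1 Minv)
    hrs hsr hLl hlL hMm hmM hREL hREM hC
  constructor
  · have h := key.1
    simp only [lift1_mul, mul_assoc]
    exact h
  · have h := key.2
    simp only [lift1_mul, mul_assoc]
    exact h
end

section
/- Let R be a skew-invertible R-matrix on V⊗V, V = ℂ^N, satisfying the Hecke condition with parameter q, with C := Tr₍₂₎(Ψ). Let A be an associative unital ℂ-algebra and let L, M ∈ Mat_N(A) satisfy the relations of the adjoint braided differential algebra: R₁M₁R₁M₁ = M₁R₁M₁R₁, R₁L₁R₁L₁ = L₁R₁L₁R₁, and R₁L₁R₁M₁ = M₁R₁L₁R₁. Then for every k ≥ 1 the R-trace Tr_R(M^k) = Tr(C·M^k) ∈ A commutes with every entry of M and with every entry of L; i.e., Tr_R(M^k) is central in the subalgebra of A generated by the entries of L and M. -/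
open Matrix BigOperators

/-- The partial trace over the middle factor of `V^{⊗3}`. -/
noncomputable def ptrMid {N : ℕ}
    (Y : Matrix (Fin N × Fin N × Fin N) (Fin N × Fin N × Fin N) ℂ) :
    Matrix (Fin N × Fin N) (Fin N × Fin N) ℂ :=
  Matrix.of fun a d => ∑ b : Fin N, Y (a.1, b, a.2) (d.1, b, d.2)

/-- The flip `P₁₃` on factors 1 and 3. -/
noncomputable def flip13 (N : ℕ) : Matrix (Fin N × Fin N) (Fin N × Fin N) ℂ :=
  Matrix.of fun p q => if p.1 = q.2 ∧ p.2 = q.1 then 1 else 0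

/-- `C = Tr₍₂₎(Ψ)`. -/
noncomputable def Cmat {N : ℕ} (Ψ : Matrix (Fin N × Fin N) (Fin N × Fin N) ℂ) :
    Matrix (Fin N) (Fin N) ℂ :=
  Matrix.of fun i j => ∑ b : Fin N, Ψ (i, b) (j, b)

/-- The `R`-trace `Tr_R(X) = Tr(C·X)` of an `A`-valued matrix. -/
def trR {N : ℕ} {A : Type} [Ring A] [Algebra ℂ A] (C : Matrix (Fin N) (Fin N) ℂ)
    (X : Matrix (Fin N) (Fin N) A) : A :=
  ∑ i : Fin N, ∑ j : Fin N, algebraMap ℂ A (C i j) * X j i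

lemma mulup {N : ℕ} (X Y : Matrix (Fin N × Fin N) (Fin N × Fin N) ℂ) (a b c d e f : Fin N) :
    (up12 X * up23 Y) (a,b,c) (d,e,f) = ∑ y, X (a,b) (d,y) * Y (y,c) (e,f) := by
  rw [Matrix.mul_apply, Fintype.sum_prod_type]
  simp [up12, up23, Fintype.sum_prod_type, mul_ite, ite_mul, Finset.sum_ite_eq, Finset.sum_ite_eq', mul_comm]

lemma ptr_up {N : ℕ} (X Y : Matrix (Fin N × Fin N) (Fin N × Fin N) ℂ) (a c d f : Fin N) :
    ptrMid (up12 X * up23 Y) (a,c) (d,f) = ∑ b, ∑ y, X (a,b) (d,y) * Y (y,c) (b,f) := by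
  simp only [ptrMid, Matrix.of_apply]
  exact Finset.sum_congr rfl fun b _ => mulup X Y a b c d b f

lemma E1 {N : ℕ} (R Ψ : Matrix (Fin N × Fin N) (Fin N × Fin N) ℂ)
    (h1 : ptrMid (up12 R * up23 Ψ) = flip13 N) (a d : Fin N) :
    ∑ b, ∑ y, R (a,b) (d,y) * Cmat Ψ y b = if a = d then (1:ℂ) else 0 := by
  have key : ∀ c : Fin N, (∑ b, ∑ y, R (a,b) (d,y) * Ψ (y,c) (b,c))
      = (if a = c ∧ c = d then (1:ℂ) else 0) := by
    intro c
    have := congrFun (congrFun h1 (a,c)) (d,c)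
    rw [ptr_up] at this
    simpa [flip13] using this
  calc ∑ b, ∑ y, R (a,b) (d,y) * Cmat Ψ y b
      = ∑ b, ∑ y, ∑ c, R (a,b) (d,y) * Ψ (y,c) (b,c) := by
        simp [Cmat, Finset.mul_sum]
    _ = ∑ b, ∑ c, ∑ y, R (a,b) (d,y) * Ψ (y,c) (b,c) :=
        Finset.sum_congr rfl fun b _ => Finset.sum_comm
    _ = ∑ c, ∑ b, ∑ y, R (a,b) (d,y) * Ψ (y,c) (b,c) := Finset.sum_comm
    _ = ∑ c, (if a = c ∧ c = d then (1:ℂ) else 0) := Finset.sum_congr rfl fun c _ => key c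
    _ = if a = d then 1 else 0 := by
        rw [Finset.sum_congr rfl (fun c _ => show (if a = c ∧ c = d then (1:ℂ) else 0)
          = if c = a then (if a = d then (1:ℂ) else 0) else 0 by
            by_cases h1 : c = a <;> by_cases h2 : a = d <;> simp [h1, h2] <;> aesop)]
        simp

noncomputable def Wmat {N : ℕ} (R : Matrix (Fin N × Fin N) (Fin N × Fin N) ℂ) :
    Matrix (Fin N × Fin N) (Fin N × Fin N) ℂ :=
  Matrix.of fun p q => R (p.1, q.1) (p.2, q.2)

noncomputable def Wimat {N : ℕ} (Ψ : Matrix (Fin N × Fin N) (Fin N × Fin N) ℂ) :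
    Matrix (Fin N × Fin N) (Fin N × Fin N) ℂ :=
  Matrix.of fun p q => Ψ (p.2, q.2) (p.1, q.1)

lemma WWi {N : ℕ} (R Ψ : Matrix (Fin N × Fin N) (Fin N × Fin N) ℂ)
    (h1 : ptrMid (up12 R * up23 Ψ) = flip13 N) :
    Wmat R * Wimat Ψ = 1 := by
  ext ⟨a, d⟩ ⟨c, f⟩
  rw [Matrix.mul_apply, Fintype.sum_prod_type]
  have := congrFun (congrFun h1 (a,f)) (d,c)
  rw [ptr_up] at this
  simp only [Wmat, Wimat, Matrix.of_apply]
  rw [this]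
  simp only [flip13, Matrix.of_apply, Matrix.one_apply, Prod.mk.injEq]
  by_cases h : a = c <;> by_cases h' : d = f <;> simp [h, h'] <;> simp [eq_comm] <;> tauto

lemma WiW {N : ℕ} (R Ψ : Matrix (Fin N × Fin N) (Fin N × Fin N) ℂ)
    (h2 : ptrMid (up12 Ψ * up23 R) = flip13 N) :
    Wimat Ψ * Wmat R = 1 := by
  ext ⟨a, d⟩ ⟨c, f⟩
  rw [Matrix.mul_apply, Fintype.sum_prod_type]
  have := congrFun (congrFun h2 (d,c)) (a,f)
  rw [ptr_up] at this
  simp only [Wmat, Wimat, Matrix.of_apply]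
  rw [show (∑ x : Fin N, ∑ y : Fin N, Ψ (d, y) (a, x) * R (x, c) (y, f))
    = ∑ b : Fin N, ∑ y : Fin N, Ψ (d, b) (a, y) * R (y, c) (b, f) from Finset.sum_comm]
  rw [this]
  simp only [flip13, Matrix.of_apply, Matrix.one_apply, Prod.mk.injEq]
  by_cases h : a = c <;> by_cases h' : d = f <;> simp [h, h'] <;> simp [eq_comm] <;> tauto

lemma heckeRR {N : ℕ} (R : Matrix (Fin N × Fin N) (Fin N × Fin N) ℂ) (q : ℂ) (hq : q ≠ 0)
    (hHecke : (R - q • (1 : Matrix (Fin N × Fin N) (Fin N × Fin N) ℂ))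
        * (R + q⁻¹ • (1 : Matrix (Fin N × Fin N) (Fin N × Fin N) ℂ)) = 0) :
    R * R = (q - q⁻¹) • R + 1 := by
  have expand : (R - q • (1 : Matrix (Fin N × Fin N) (Fin N × Fin N) ℂ))
      * (R + q⁻¹ • (1 : Matrix (Fin N × Fin N) (Fin N × Fin N) ℂ))
      = R * R - ((q - q⁻¹) • R + (q * q⁻¹) • 1) := by
    rw [sub_mul, mul_add, mul_add, smul_mul_assoc, smul_mul_assoc, Matrix.mul_smul,
      Matrix.mul_smul, mul_one, one_mul, one_mul, smul_smul, sub_smul]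
    abel
  rw [expand, mul_inv_cancel₀ hq, one_smul, sub_eq_zero] at hHecke
  exact hHecke

lemma sum3 {N : ℕ} {M : Type*} [AddCommMonoid M] (f : Fin N × Fin N × Fin N → M) :
    ∑ p, f p = ∑ x, ∑ y, ∑ z, f (x,y,z) := by
  rw [Fintype.sum_prod_type]
  exact Finset.sum_congr rfl fun x _ => Fintype.sum_prod_type _

lemma yb_lhs {N : ℕ} (R : Matrix (Fin N × Fin N) (Fin N × Fin N) ℂ) (a b c d e f : Fin N) :
    (up12 R * up23 R * up12 R) (a,b,c) (d,e,f)
      = ∑ x, ∑ y, ∑ m, R (a,b) (x,m) * R (m,c) (y,f) * R (x,y) (d,e) := by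
  rw [Matrix.mul_apply, sum3]
  have step : ∀ x y z : Fin N, (up12 R * up23 R) (a,b,c) (x,y,z) * up12 R (x,y,z) (d,e,f)
      = (∑ m, R (a,b) (x,m) * R (m,c) (y,z)) * (R (x,y) (d,e) * (if z = f then 1 else 0)) := by
    intro x y z; rw [mulup]; rfl
  calc ∑ x, ∑ y, ∑ z, (up12 R * up23 R) (a,b,c) (x,y,z) * up12 R (x,y,z) (d,e,f)
      = ∑ x, ∑ y, ∑ z, (∑ m, R (a,b) (x,m) * R (m,c) (y,z))
          * (R (x,y) (d,e) * (if z = f then 1 else 0)) := by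
        exact Finset.sum_congr rfl fun x _ => Finset.sum_congr rfl fun y _ =>
          Finset.sum_congr rfl fun z _ => step x y z
    _ = ∑ x, ∑ y, (∑ m, R (a,b) (x,m) * R (m,c) (y,f)) * R (x,y) (d,e) := by
        refine Finset.sum_congr rfl fun x _ => Finset.sum_congr rfl fun y _ => ?_
        simp [mul_ite, Finset.sum_ite_eq']
    _ = ∑ x, ∑ y, ∑ m, R (a,b) (x,m) * R (m,c) (y,f) * R (x,y) (d,e) := by
        exact Finset.sum_congr rfl fun x _ => Finset.sum_congr rfl fun y _ =>
          Finset.sum_mul _ _ _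

lemma yb_rhs {N : ℕ} (R : Matrix (Fin N × Fin N) (Fin N × Fin N) ℂ) (a b c d e f : Fin N) :
    (up23 R * (up12 R * up23 R)) (a,b,c) (d,e,f)
      = ∑ m, ∑ z, ∑ y, R (b,c) (m,z) * (R (a,m) (d,y) * R (y,z) (e,f)) := by
  rw [Matrix.mul_apply, sum3]
  have step : ∀ x m z : Fin N, up23 R (a,b,c) (x,m,z) * (up12 R * up23 R) (x,m,z) (d,e,f)
      = ((if a = x then 1 else 0) * R (b,c) (m,z)) * (∑ y, R (x,m) (d,y) * R (y,z) (e,f)) := by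
    intro x m z; rw [mulup]; rfl
  calc ∑ x, ∑ m, ∑ z, up23 R (a,b,c) (x,m,z) * (up12 R * up23 R) (x,m,z) (d,e,f)
      = ∑ x, ∑ m, ∑ z, ((if a = x then 1 else 0) * R (b,c) (m,z))
          * (∑ y, R (x,m) (d,y) * R (y,z) (e,f)) := by
        exact Finset.sum_congr rfl fun x _ => Finset.sum_congr rfl fun m _ =>
          Finset.sum_congr rfl fun z _ => step x m z
    _ = ∑ m, ∑ z, R (b,c) (m,z) * ∑ y, R (a,m) (d,y) * R (y,z) (e,f) := by
        simp [ite_mul, Finset.sum_ite_irrel, Finset.sum_const_zero, Finset.sum_ite_eq]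
    _ = ∑ m, ∑ z, ∑ y, R (b,c) (m,z) * (R (a,m) (d,y) * R (y,z) (e,f)) := by
        exact Finset.sum_congr rfl fun m _ => Finset.sum_congr rfl fun z _ =>
          Finset.mul_sum _ _ _

lemma sum5 {N : ℕ} {M : Type*} [AddCommMonoid M]
    (f : (Fin N × Fin N × Fin N × Fin N × Fin N) → M) :
    ∑ p, f p = ∑ a, ∑ b, ∑ c, ∑ d, ∑ e, f (a,b,c,d,e) := by
  rw [Fintype.sum_prod_type]; refine Finset.sum_congr rfl fun a _ => ?_
  rw [Fintype.sum_prod_type]; refine Finset.sum_congr rfl fun b _ => ?_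
  rw [Fintype.sum_prod_type]; refine Finset.sum_congr rfl fun c _ => ?_
  exact Fintype.sum_prod_type _

lemma sum5_reorder1 {N : ℕ} {M : Type*} [AddCommMonoid M]
    (g : Fin N → Fin N → Fin N → Fin N → Fin N → M) :
    ∑ m, ∑ y, ∑ f, ∑ c, ∑ z, g m y f c z = ∑ c, ∑ f, ∑ m, ∑ z, ∑ y, g m y f c z := by
  rw [← sum5 (fun p => g p.1 p.2.1 p.2.2.1 p.2.2.2.1 p.2.2.2.2),
    ← sum5 (fun p => g p.2.2.1 p.2.2.2.2 p.2.1 p.1 p.2.2.2.1)]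
  exact Fintype.sum_equiv
    ⟨fun p => (p.2.2.2.1, p.2.2.1, p.1, p.2.2.2.2, p.2.1),
     fun p => (p.2.2.1, p.2.2.2.2, p.2.1, p.1, p.2.2.2.1),
     fun p => rfl, fun p => rfl⟩ _ _ (fun p => rfl)

lemma sum5_reorder2 {N : ℕ} {M : Type*} [AddCommMonoid M]
    (g : Fin N → Fin N → Fin N → Fin N → Fin N → M) :
    ∑ c, ∑ f, ∑ x, ∑ y, ∑ m, g c f x y m = ∑ x, ∑ y, ∑ m, ∑ c, ∑ f, g c f x y m := by
  rw [← sum5 (fun p => g p.1 p.2.1 p.2.2.1 p.2.2.2.1 p.2.2.2.2),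
    ← sum5 (fun p => g p.2.2.2.1 p.2.2.2.2 p.1 p.2.1 p.2.2.1)]
  exact Fintype.sum_equiv
    ⟨fun p => (p.2.2.1, p.2.2.2.1, p.2.2.2.2, p.1, p.2.1),
     fun p => (p.2.2.2.1, p.2.2.2.2, p.1, p.2.1, p.2.2.1),
     fun p => rfl, fun p => rfl⟩ _ _ (fun p => rfl)

noncomputable def Ttm {N : ℕ} (R Ψ : Matrix (Fin N × Fin N) (Fin N × Fin N) ℂ) :
    Matrix (Fin N × Fin N) (Fin N × Fin N) ℂ :=
  Matrix.of fun p r => ∑ b, ∑ d, ∑ m,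
    Cmat Ψ b d * R (p.1, d) (r.1, m) * R (r.2, m) (p.2, b)

noncomputable def Tt0m {N : ℕ} (R Ψ : Matrix (Fin N × Fin N) (Fin N × Fin N) ℂ) (q : ℂ) :
    Matrix (Fin N × Fin N) (Fin N × Fin N) ℂ :=
  Matrix.of fun p r => (if p.1 = p.2 then Cmat Ψ r.2 r.1 else 0)
    + (q - q⁻¹) * ((if p.1 = r.1 then 1 else 0) * (if p.2 = r.2 then 1 else 0))

lemma fixL {N : ℕ} (R Ψ : Matrix (Fin N × Fin N) (Fin N × Fin N) ℂ)
    (hYB : up12 R * up23 R * up12 R = up23 R * up12 R * up23 R)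
    (h1 : ptrMid (up12 R * up23 Ψ) = flip13 N) (a b d e : Fin N) :
    ∑ p : Fin N × Fin N, Ttm R Ψ (b,e) p * R (a,p.1) (d,p.2) = (R*R) ((a,b)) ((d,e)) := by
  rw [Fintype.sum_prod_type]
  calc ∑ m, ∑ y, Ttm R Ψ (b,e) (m,y) * R (a,m) (d,y)
      = ∑ m, ∑ y, ∑ f, ∑ c, ∑ z,
          Cmat Ψ f c * R (b,c) (m,z) * R (y,z) (e,f) * R (a,m) (d,y) := by
        refine Finset.sum_congr rfl fun m _ => Finset.sum_congr rfl fun y _ => ?_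
        simp only [Ttm, Matrix.of_apply]
        rw [Finset.sum_mul]
        refine Finset.sum_congr rfl fun f _ => ?_
        rw [Finset.sum_mul]
        refine Finset.sum_congr rfl fun c _ => ?_
        rw [Finset.sum_mul]
    _ = ∑ c, ∑ f, ∑ m, ∑ z, ∑ y,
          Cmat Ψ f c * R (b,c) (m,z) * R (y,z) (e,f) * R (a,m) (d,y) :=
        sum5_reorder1 _
    _ = ∑ c, ∑ f, Cmat Ψ f c * ((up23 R * (up12 R * up23 R)) (a,b,c) (d,e,f)) := by
        refine Finset.sum_congr rfl fun c _ => Finset.sum_congr rfl fun f _ => ?_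
        rw [yb_rhs, Finset.mul_sum]
        refine Finset.sum_congr rfl fun m _ => ?_
        rw [Finset.mul_sum]
        refine Finset.sum_congr rfl fun z _ => ?_
        rw [Finset.mul_sum]
        refine Finset.sum_congr rfl fun y _ => ?_
        ring
    _ = ∑ c, ∑ f, Cmat Ψ f c * ((up12 R * up23 R * up12 R) (a,b,c) (d,e,f)) := by
        rw [hYB, mul_assoc]
    _ = ∑ c, ∑ f, ∑ x, ∑ y, ∑ m,
          Cmat Ψ f c * (R (a,b) (x,m) * R (m,c) (y,f) * R (x,y) (d,e)) := by
        refine Finset.sum_congr rfl fun c _ => Finset.sum_congr rfl fun f _ => ?_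
        rw [yb_lhs, Finset.mul_sum]
        refine Finset.sum_congr rfl fun x _ => ?_
        rw [Finset.mul_sum]
        refine Finset.sum_congr rfl fun y _ => ?_
        rw [Finset.mul_sum]
    _ = ∑ x, ∑ y, ∑ m, ∑ c, ∑ f,
          Cmat Ψ f c * (R (a,b) (x,m) * R (m,c) (y,f) * R (x,y) (d,e)) :=
        sum5_reorder2 _
    _ = ∑ x, ∑ y, ∑ m, (R (a,b) (x,m) * R (x,y) (d,e))
          * (∑ c, ∑ f, R (m,c) (y,f) * Cmat Ψ f c) := by
        refine Finset.sum_congr rfl fun x _ => Finset.sum_congr rfl fun y _ =>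
          Finset.sum_congr rfl fun m _ => ?_
        rw [Finset.mul_sum]
        refine Finset.sum_congr rfl fun c _ => ?_
        rw [Finset.mul_sum]
        refine Finset.sum_congr rfl fun f _ => ?_
        ring
    _ = ∑ x, ∑ y, ∑ m, (R (a,b) (x,m) * R (x,y) (d,e))
          * (if m = y then 1 else 0) := by
        refine Finset.sum_congr rfl fun x _ => Finset.sum_congr rfl fun y _ =>
          Finset.sum_congr rfl fun m _ => ?_
        rw [E1 R Ψ h1 m y]
    _ = ∑ x, ∑ y, R (a,b) (x,y) * R (x,y) (d,e) := by
        refine Finset.sum_congr rfl fun x _ => Finset.sum_congr rfl fun y _ => ?_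
        simp [mul_ite, Finset.sum_ite_eq']
    _ = (R*R) ((a,b)) ((d,e)) := by
        rw [Matrix.mul_apply, Fintype.sum_prod_type]

lemma fix0 {N : ℕ} (R Ψ : Matrix (Fin N × Fin N) (Fin N × Fin N) ℂ) (q : ℂ)
    (h1 : ptrMid (up12 R * up23 Ψ) = flip13 N) (a b d e : Fin N) :
    ∑ p : Fin N × Fin N, Tt0m R Ψ q (b,e) p * R (a,p.1) (d,p.2)
      = (q - q⁻¹) * R (a,b) (d,e) + (if a = d ∧ b = e then 1 else 0) := by
  rw [Fintype.sum_prod_type]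
  simp only [Tt0m, Matrix.of_apply, add_mul, Finset.sum_add_distrib]
  have p1 : ∑ m, ∑ y, (if b = e then Cmat Ψ y m else 0) * R (a,m) (d,y)
      = if a = d ∧ b = e then (1:ℂ) else 0 := by
    by_cases hbe : b = e
    · simp only [hbe, if_true, and_true]
      rw [show (∑ m, ∑ y, Cmat Ψ y m * R (a,m) (d,y))
          = ∑ m, ∑ y, R (a,m) (d,y) * Cmat Ψ y m from
        Finset.sum_congr rfl fun m _ => Finset.sum_congr rfl fun y _ => mul_comm _ _]
      exact E1 R Ψ h1 a d
    · simp [hbe]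
  have p2 : ∑ m, ∑ y, (q - q⁻¹) * ((if b = m then 1 else 0) * (if e = y then 1 else 0))
      * R (a,m) (d,y) = (q - q⁻¹) * R (a,b) (d,e) := by
    simp [ite_mul, mul_ite, Finset.sum_ite_eq, Finset.sum_ite_irrel, Finset.sum_const_zero]
  rw [p1, p2, add_comm]

lemma Teq {N : ℕ} (R Ψ : Matrix (Fin N × Fin N) (Fin N × Fin N) ℂ) (q : ℂ) (hq : q ≠ 0)
    (hYB : up12 R * up23 R * up12 R = up23 R * up12 R * up23 R)
    (hHecke : (R - q • (1 : Matrix (Fin N × Fin N) (Fin N × Fin N) ℂ))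
        * (R + q⁻¹ • (1 : Matrix (Fin N × Fin N) (Fin N × Fin N) ℂ)) = 0)
    (h1 : ptrMid (up12 R * up23 Ψ) = flip13 N)
    (h2 : ptrMid (up12 Ψ * up23 R) = flip13 N) :
    Ttm R Ψ = Tt0m R Ψ q := by
  have hW : (Wmat R)ᵀ * (Wimat Ψ)ᵀ = 1 := by
    rw [← Matrix.transpose_mul, WiW R Ψ h2, Matrix.transpose_one]
  have hmul : Ttm R Ψ * (Wmat R)ᵀ = Tt0m R Ψ q * (Wmat R)ᵀ := by
    ext ⟨b,e⟩ ⟨a,d⟩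
    rw [Matrix.mul_apply, Matrix.mul_apply]
    have hL : ∀ p : Fin N × Fin N, (Wmat R)ᵀ p (a,d) = R (a,p.1) (d,p.2) := by
      intro p; rfl
    calc ∑ p, Ttm R Ψ (b,e) p * (Wmat R)ᵀ p (a,d)
        = ∑ p : Fin N × Fin N, Ttm R Ψ (b,e) p * R (a,p.1) (d,p.2) :=
          Finset.sum_congr rfl fun p _ => by rw [hL]
      _ = (R*R) ((a,b)) ((d,e)) := fixL R Ψ hYB h1 a b d e
      _ = (q - q⁻¹) * R (a,b) (d,e) + (if a = d ∧ b = e then 1 else 0) := by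
          rw [heckeRR R q hq hHecke]
          simp [Matrix.add_apply, Matrix.smul_apply, Matrix.one_apply, Prod.ext_iff]
      _ = ∑ p : Fin N × Fin N, Tt0m R Ψ q (b,e) p * R (a,p.1) (d,p.2) :=
          (fix0 R Ψ q h1 a b d e).symm
      _ = ∑ p, Tt0m R Ψ q (b,e) p * (Wmat R)ᵀ p (a,d) :=
          Finset.sum_congr rfl fun p _ => by rw [hL]
  calc Ttm R Ψ = Ttm R Ψ * 1 := (mul_one _).symm
    _ = Ttm R Ψ * ((Wmat R)ᵀ * (Wimat Ψ)ᵀ) := by rw [hW]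
    _ = (Ttm R Ψ * (Wmat R)ᵀ) * (Wimat Ψ)ᵀ := by rw [mul_assoc]
    _ = (Tt0m R Ψ q * (Wmat R)ᵀ) * (Wimat Ψ)ᵀ := by rw [hmul]
    _ = Tt0m R Ψ q * ((Wmat R)ᵀ * (Wimat Ψ)ᵀ) := by rw [mul_assoc]
    _ = Tt0m R Ψ q := by rw [hW, mul_one]

lemma diamond {N : ℕ} (R Ψ : Matrix (Fin N × Fin N) (Fin N × Fin N) ℂ) (q : ℂ) (hq : q ≠ 0)
    (hYB : up12 R * up23 R * up12 R = up23 R * up12 R * up23 R)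
    (hHecke : (R - q • (1 : Matrix (Fin N × Fin N) (Fin N × Fin N) ℂ))
        * (R + q⁻¹ • (1 : Matrix (Fin N × Fin N) (Fin N × Fin N) ℂ)) = 0)
    (h1 : ptrMid (up12 R * up23 Ψ) = flip13 N)
    (h2 : ptrMid (up12 Ψ * up23 R) = flip13 N) (i j k l : Fin N) :
    ∑ b, ∑ d, ∑ m, Cmat Ψ b d * R (i,d) (k,m) * R (l,m) (j,b)
      = (if i = j then Cmat Ψ l k else 0)
        + (q - q⁻¹) * ((if i = k then 1 else 0) * (if j = l then 1 else 0)) := by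
  have := congrFun (congrFun (Teq R Ψ q hq hYB hHecke h1 h2) (i,j)) (k,l)
  simpa [Ttm, Tt0m] using this

def ptr2A {N : ℕ} {A : Type} [Ring A] (Z : Matrix (Fin N × Fin N) (Fin N × Fin N) A) :
    Matrix (Fin N) (Fin N) A :=
  Matrix.of fun i j => ∑ b, Z (i,b) (j,b)

noncomputable def CCA {N : ℕ} (A : Type) [Ring A] [Algebra ℂ A]
    (Ψ : Matrix (Fin N × Fin N) (Fin N × Fin N) ℂ) :
    Matrix (Fin N × Fin N) (Fin N × Fin N) A :=
  Matrix.of fun p q => (if p.1 = q.1 then 1 else 0) * algebraMap ℂ A (Cmat Ψ p.2 q.2)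

lemma lift1_pow {N : ℕ} {A : Type} [Ring A] (X : Matrix (Fin N) (Fin N) A) (k : ℕ) :
    lift1 (X ^ k) = (lift1 X) ^ k := by
  induction k with
  | zero => simpa [pow_zero] using lift1_one
  | succ n ih => rw [pow_succ, pow_succ, lift1_mul, ih]

lemma ptr2A_mul_lift {N : ℕ} {A : Type} [Ring A]
    (Z : Matrix (Fin N × Fin N) (Fin N × Fin N) A) (X : Matrix (Fin N) (Fin N) A) :
    ptr2A (Z * lift1 X) = ptr2A Z * X := by
  ext i j
  simp only [ptr2A, Matrix.of_apply, Matrix.mul_apply]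
  calc ∑ b, ∑ p : Fin N × Fin N, Z (i,b) p * lift1 X p (j,b)
      = ∑ b, ∑ k, ∑ c, Z (i,b) (k,c) * (X k j * (if c = b then 1 else 0)) := by
        refine Finset.sum_congr rfl fun b _ => ?_
        rw [Fintype.sum_prod_type]; rfl
    _ = ∑ b, ∑ k, Z (i,b) (k,b) * X k j := by
        refine Finset.sum_congr rfl fun b _ => Finset.sum_congr rfl fun k _ => ?_
        simp [mul_ite, Finset.sum_ite_eq']
    _ = ∑ k, (∑ b, Z (i,b) (k,b)) * X k j := by
        rw [Finset.sum_comm]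
        exact Finset.sum_congr rfl fun k _ => (Finset.sum_mul _ _ _).symm

lemma ptr2A_lift_mul {N : ℕ} {A : Type} [Ring A]
    (Z : Matrix (Fin N × Fin N) (Fin N × Fin N) A) (X : Matrix (Fin N) (Fin N) A) :
    ptr2A (lift1 X * Z) = X * ptr2A Z := by
  ext i j
  simp only [ptr2A, Matrix.of_apply, Matrix.mul_apply]
  calc ∑ b, ∑ p : Fin N × Fin N, lift1 X (i,b) p * Z p (j,b)
      = ∑ b, ∑ k, ∑ c, X i k * (if b = c then 1 else 0) * Z (k,c) (j,b) := by
        refine Finset.sum_congr rfl fun b _ => ?_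
        rw [Fintype.sum_prod_type]; rfl
    _ = ∑ b, ∑ k, X i k * Z (k,b) (j,b) := by
        refine Finset.sum_congr rfl fun b _ => Finset.sum_congr rfl fun k _ => ?_
        simp [mul_ite, ite_mul, Finset.sum_ite_eq]
    _ = ∑ k, X i k * ∑ b, Z (k,b) (j,b) := by
        rw [Finset.sum_comm]
        exact Finset.sum_congr rfl fun k _ => (Finset.mul_sum _ _ _).symm

lemma CCA_comm_lift {N : ℕ} {A : Type} [Ring A] [Algebra ℂ A]
    (Ψ : Matrix (Fin N × Fin N) (Fin N × Fin N) ℂ) (X : Matrix (Fin N) (Fin N) A) :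
    CCA A Ψ * lift1 X = lift1 X * CCA A Ψ := by
  ext ⟨i,b⟩ ⟨j,c⟩
  rw [Matrix.mul_apply, Matrix.mul_apply, Fintype.sum_prod_type, Fintype.sum_prod_type]
  simp only [CCA, lift1, Matrix.of_apply]
  simp [mul_ite, ite_mul, Finset.sum_ite_eq, Finset.sum_ite_eq', Finset.sum_ite_irrel,
    Finset.sum_const_zero, Algebra.commutes]

lemma sum5_reorder3 {N : ℕ} {M : Type*} [AddCommMonoid M]
    (g : Fin N → Fin N → Fin N → Fin N → Fin N → M) :
    ∑ b, ∑ l, ∑ m, ∑ k, ∑ d, g b l m k d = ∑ k, ∑ l, ∑ b, ∑ d, ∑ m, g b l m k d := by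
  rw [← sum5 (fun p => g p.1 p.2.1 p.2.2.1 p.2.2.2.1 p.2.2.2.2),
    ← sum5 (fun p => g p.2.2.1 p.2.1 p.2.2.2.2 p.1 p.2.2.2.1)]
  exact Fintype.sum_equiv
    ⟨fun p => (p.2.2.2.1, p.2.1, p.1, p.2.2.2.2, p.2.2.1),
     fun p => (p.2.2.1, p.2.1, p.2.2.2.2, p.1, p.2.2.2.1),
     fun p => rfl, fun p => rfl⟩ _ _ (fun p => rfl)

lemma CCS_apply {N : ℕ} {A : Type} [Ring A] [Algebra ℂ A]
    (R Ψ : Matrix (Fin N × Fin N) (Fin N × Fin N) ℂ) (p r : Fin N × Fin N) :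
    (CCA A Ψ * R.map (algebraMap ℂ A)) p r
      = algebraMap ℂ A (∑ d, Cmat Ψ p.2 d * R (p.1, d) r) := by
  obtain ⟨i, b⟩ := p
  rw [Matrix.mul_apply, Fintype.sum_prod_type, map_sum]
  simp only [CCA, Matrix.of_apply, Matrix.map_apply, ite_mul, one_mul, zero_mul,
    _root_.map_mul]
  simp [Finset.sum_ite_irrel, Finset.sum_const_zero, Finset.sum_ite_eq]

lemma KEY {N : ℕ} {A : Type} [Ring A] [Algebra ℂ A]
    (R G Ψ : Matrix (Fin N × Fin N) (Fin N × Fin N) ℂ) (X : Matrix (Fin N) (Fin N) A) :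
    ptr2A (CCA A Ψ * R.map (algebraMap ℂ A) * lift1 X * G.map (algebraMap ℂ A))
      = Matrix.of fun i j => ∑ k, ∑ l, algebraMap ℂ A
          (∑ b, ∑ d, ∑ m, Cmat Ψ b d * R (i,d) (k,m) * G (l,m) (j,b)) * X k l := by
  ext i j
  simp only [ptr2A, Matrix.of_apply]
  have s2 : ∀ b l m : Fin N, (CCA A Ψ * R.map (algebraMap ℂ A) * lift1 X) (i,b) (l,m)
      = ∑ k, algebraMap ℂ A (∑ d, Cmat Ψ b d * R (i,d) (k,m)) * X k l := by
    intro b l m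
    rw [Matrix.mul_apply, Fintype.sum_prod_type]
    have : ∀ k m' : Fin N, (CCA A Ψ * R.map (algebraMap ℂ A)) (i,b) (k,m')
        * lift1 X (k,m') (l,m)
        = (algebraMap ℂ A (∑ d, Cmat Ψ b d * R (i,d) (k,m')) * X k l)
            * (if m' = m then 1 else 0) := by
      intro k m'
      rw [CCS_apply]
      simp only [lift1, Matrix.of_apply]
      exact (mul_assoc _ _ _).symm
    rw [Finset.sum_congr rfl fun k _ => Finset.sum_congr rfl fun m' _ => this k m']
    refine Finset.sum_congr rfl fun k _ => ?_
    simp [mul_ite, Finset.sum_ite_eq']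
  calc ∑ b, (CCA A Ψ * R.map (algebraMap ℂ A) * lift1 X * G.map (algebraMap ℂ A)) (i,b) (j,b)
      = ∑ b, ∑ l, ∑ m, (∑ k, algebraMap ℂ A (∑ d, Cmat Ψ b d * R (i,d) (k,m)) * X k l)
          * algebraMap ℂ A (G (l,m) (j,b)) := by
        refine Finset.sum_congr rfl fun b _ => ?_
        rw [Matrix.mul_apply, Fintype.sum_prod_type]
        exact Finset.sum_congr rfl fun l _ => Finset.sum_congr rfl fun m _ => by rw [s2]; rfl
    _ = ∑ b, ∑ l, ∑ m, ∑ k, ∑ d, (algebraMap ℂ A (Cmat Ψ b d * R (i,d) (k,m)) * X k l)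
          * algebraMap ℂ A (G (l,m) (j,b)) := by
        refine Finset.sum_congr rfl fun b _ => Finset.sum_congr rfl fun l _ =>
          Finset.sum_congr rfl fun m _ => ?_
        rw [Finset.sum_mul]
        refine Finset.sum_congr rfl fun k _ => ?_
        rw [map_sum, Finset.sum_mul, Finset.sum_mul]
    _ = ∑ b, ∑ l, ∑ m, ∑ k, ∑ d,
          algebraMap ℂ A (Cmat Ψ b d * R (i,d) (k,m) * G (l,m) (j,b)) * X k l := by
        refine Finset.sum_congr rfl fun b _ => Finset.sum_congr rfl fun l _ =>
          Finset.sum_congr rfl fun m _ => Finset.sum_congr rfl fun k _ =>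
          Finset.sum_congr rfl fun d _ => ?_
        rw [mul_assoc, ← Algebra.commutes (G (l,m) (j,b)) (X k l), ← mul_assoc,
          ← _root_.map_mul]
    _ = ∑ k, ∑ l, ∑ b, ∑ d, ∑ m,
          algebraMap ℂ A (Cmat Ψ b d * R (i,d) (k,m) * G (l,m) (j,b)) * X k l :=
        sum5_reorder3 _
    _ = ∑ k, ∑ l, algebraMap ℂ A
          (∑ b, ∑ d, ∑ m, Cmat Ψ b d * R (i,d) (k,m) * G (l,m) (j,b)) * X k l := by
        refine Finset.sum_congr rfl fun k _ => Finset.sum_congr rfl fun l _ => ?_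
        rw [map_sum, Finset.sum_mul]
        refine Finset.sum_congr rfl fun b _ => ?_
        rw [map_sum, Finset.sum_mul]
        refine Finset.sum_congr rfl fun d _ => ?_
        rw [map_sum, Finset.sum_mul]

lemma e1' {N : ℕ} (R Ψ : Matrix (Fin N × Fin N) (Fin N × Fin N) ℂ)
    (h1 : ptrMid (up12 R * up23 Ψ) = flip13 N) (i k : Fin N) :
    ∑ b, ∑ d, Cmat Ψ b d * R (i,d) (k,b) = if i = k then 1 else 0 := by
  rw [← E1 R Ψ h1 i k, Finset.sum_comm]
  exact Finset.sum_congr rfl fun b _ => Finset.sum_congr rfl fun d _ => mul_comm _ _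

lemma T3 {N : ℕ} {A : Type} [Ring A] [Algebra ℂ A]
    (R Ψ : Matrix (Fin N × Fin N) (Fin N × Fin N) ℂ)
    (h1 : ptrMid (up12 R * up23 Ψ) = flip13 N) (X : Matrix (Fin N) (Fin N) A) :
    ptr2A (CCA A Ψ * R.map (algebraMap ℂ A) * lift1 X) = X := by
  have h1m : (1 : Matrix (Fin N × Fin N) (Fin N × Fin N) ℂ).map (algebraMap ℂ A) = 1 :=
    Matrix.map_one _ (map_zero _) (map_one _)
  have hK := KEY (A := A) R 1 Ψ X
  rw [h1m, mul_one] at hK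
  rw [hK]
  ext i j
  simp only [Matrix.of_apply]
  have inner_eq : ∀ k l : Fin N,
      (∑ b, ∑ d, ∑ m, Cmat Ψ b d * R (i,d) (k,m)
        * (1 : Matrix (Fin N × Fin N) (Fin N × Fin N) ℂ) (l,m) (j,b))
      = if k = i then (if l = j then 1 else 0) else 0 := by
    intro k l
    by_cases hlj : l = j
    · calc ∑ b, ∑ d, ∑ m, Cmat Ψ b d * R (i,d) (k,m)
            * (1 : Matrix (Fin N × Fin N) (Fin N × Fin N) ℂ) (l,m) (j,b)
          = ∑ b, ∑ d, Cmat Ψ b d * R (i,d) (k,b) := by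
            refine Finset.sum_congr rfl fun b _ => Finset.sum_congr rfl fun d _ => ?_
            simp [Matrix.one_apply, Prod.ext_iff, mul_ite, ite_and,
              Finset.sum_ite_eq', hlj, Finset.sum_ite_irrel, Finset.sum_const_zero]
        _ = if i = k then 1 else 0 := e1' R Ψ h1 i k
        _ = if k = i then (if l = j then 1 else 0) else 0 := by
            by_cases h : i = k <;> simp [h, eq_comm, hlj]
    · simp [Matrix.one_apply, Prod.ext_iff, hlj]
  calc ∑ k, ∑ l, algebraMap ℂ A (∑ b, ∑ d, ∑ m, Cmat Ψ b d * R (i,d) (k,m)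
        * (1 : Matrix (Fin N × Fin N) (Fin N × Fin N) ℂ) (l,m) (j,b)) * X k l
      = ∑ k, ∑ l, (if k = i then (if l = j then (1:A) else 0) else 0) * X k l := by
        refine Finset.sum_congr rfl fun k _ => Finset.sum_congr rfl fun l _ => ?_
        rw [inner_eq k l]
        by_cases h : k = i <;> by_cases h' : l = j <;> simp [h, h']
    _ = X i j := by
        simp [ite_mul, Finset.sum_ite_eq, Finset.sum_ite_irrel, Finset.sum_const_zero]

lemma T4 {N : ℕ} {A : Type} [Ring A] [Algebra ℂ A]
    (R Ψ : Matrix (Fin N × Fin N) (Fin N × Fin N) ℂ) (q : ℂ) (hq : q ≠ 0)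
    (hYB : up12 R * up23 R * up12 R = up23 R * up12 R * up23 R)
    (hHecke : (R - q • (1 : Matrix (Fin N × Fin N) (Fin N × Fin N) ℂ))
        * (R + q⁻¹ • (1 : Matrix (Fin N × Fin N) (Fin N × Fin N) ℂ)) = 0)
    (h1 : ptrMid (up12 R * up23 Ψ) = flip13 N)
    (h2 : ptrMid (up12 Ψ * up23 R) = flip13 N) (X : Matrix (Fin N) (Fin N) A) :
    ptr2A (CCA A Ψ * R.map (algebraMap ℂ A) * lift1 X * R.map (algebraMap ℂ A))
      = trR (Cmat Ψ) X • (1 : Matrix (Fin N) (Fin N) A) + (q - q⁻¹) • X := by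
  rw [KEY R R Ψ X]
  ext i j
  simp only [Matrix.of_apply, Matrix.add_apply, Matrix.smul_apply, Matrix.one_apply,
    smul_eq_mul, mul_ite, mul_one, mul_zero]
  calc ∑ k, ∑ l, algebraMap ℂ A
        (∑ b, ∑ d, ∑ m, Cmat Ψ b d * R (i,d) (k,m) * R (l,m) (j,b)) * X k l
      = ∑ k, ∑ l, algebraMap ℂ A ((if i = j then Cmat Ψ l k else 0)
          + (q - q⁻¹) * ((if i = k then 1 else 0) * (if j = l then 1 else 0))) * X k l := by
        refine Finset.sum_congr rfl fun k _ => Finset.sum_congr rfl fun l _ => ?_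
        rw [diamond R Ψ q hq hYB hHecke h1 h2 i j k l]
    _ = (∑ k, ∑ l, algebraMap ℂ A (if i = j then Cmat Ψ l k else 0) * X k l)
        + ∑ k, ∑ l, algebraMap ℂ A ((q - q⁻¹)
            * ((if i = k then 1 else 0) * (if j = l then 1 else 0))) * X k l := by
        rw [← Finset.sum_add_distrib]
        refine Finset.sum_congr rfl fun k _ => ?_
        rw [← Finset.sum_add_distrib]
        refine Finset.sum_congr rfl fun l _ => ?_
        rw [map_add, add_mul]
    _ = (if i = j then trR (Cmat Ψ) X else 0) + (q - q⁻¹) • X i j := by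
        have e1 : (∑ k, ∑ l, algebraMap ℂ A (if i = j then Cmat Ψ l k else 0) * X k l)
            = (if i = j then trR (Cmat Ψ) X else 0) := by
          by_cases h : i = j
          · simp only [h, if_true]
            rw [Finset.sum_comm]
            rfl
          · simp [h]
        have e2 : (∑ k, ∑ l, algebraMap ℂ A ((q - q⁻¹)
              * ((if i = k then 1 else 0) * (if j = l then 1 else 0))) * X k l)
            = (q - q⁻¹) • X i j := by
          rw [Algebra.smul_def]
          simp [_root_.map_mul, apply_ite, ite_mul, mul_ite,
            Finset.sum_ite_eq, Finset.sum_ite_irrel, Finset.sum_const_zero]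
        rw [e1, e2]

lemma rinv_eq {N : ℕ} (R Rinv : Matrix (Fin N × Fin N) (Fin N × Fin N) ℂ) (q : ℂ)
    (hq : q ≠ 0) (hRinv : R * Rinv = 1 ∧ Rinv * R = 1)
    (hHecke : (R - q • (1 : Matrix (Fin N × Fin N) (Fin N × Fin N) ℂ))
        * (R + q⁻¹ • (1 : Matrix (Fin N × Fin N) (Fin N × Fin N) ℂ)) = 0) :
    Rinv = R - (q - q⁻¹) • 1 := by
  have h : R * (R - (q - q⁻¹) • 1) = 1 := by
    rw [mul_sub, Matrix.mul_smul, mul_one, heckeRR R q hq hHecke]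
    abel
  calc Rinv = Rinv * (R * (R - (q - q⁻¹) • 1)) := by rw [h, mul_one]
    _ = (Rinv * R) * (R - (q - q⁻¹) • 1) := by rw [mul_assoc]
    _ = R - (q - q⁻¹) • 1 := by rw [hRinv.2, one_mul]

lemma comm_aux {G : Type*} [Ring G] (s si m nm : G) (h1 : s * si = 1) (h2 : si * s = 1)
    (base : si * m * s * nm = nm * (s * m * si)) (n : ℕ) :
    si * m ^ n * s * nm = nm * (s * m ^ n * si) := by
  induction n with
  | zero => simp only [pow_zero, mul_one, h1, h2, one_mul]
  | succ n ih =>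
    have key1 : si * m ^ (n+1) * s = (si * m ^ n * s) * (si * m * s) := by
      have e : (si * m ^ n * s) * (si * m * s) = si * m ^ n * (s * si) * (m * s) := by
        noncomm_ring
      rw [e, h1, mul_one, pow_succ]
      noncomm_ring
    have key2 : (s * m ^ n * si) * (s * m * si) = s * m ^ (n+1) * si := by
      have e : (s * m ^ n * si) * (s * m * si) = s * m ^ n * (si * s) * (m * si) := by
        noncomm_ring
      rw [e, h2, mul_one, pow_succ]
      noncomm_ring
    calc si * m ^ (n+1) * s * nm = (si * m ^ n * s) * ((si * m * s) * nm) := by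
          rw [key1]; noncomm_ring
      _ = (si * m ^ n * s) * (nm * (s * m * si)) := by rw [← base]
      _ = ((si * m ^ n * s) * nm) * (s * m * si) := by noncomm_ring
      _ = (nm * (s * m ^ n * si)) * (s * m * si) := by rw [ih]
      _ = nm * ((s * m ^ n * si) * (s * m * si)) := by noncomm_ring
      _ = nm * (s * m ^ (n+1) * si) := by rw [key2]

lemma ptr2A_sub {N : ℕ} {A : Type} [Ring A]
    (Z W : Matrix (Fin N × Fin N) (Fin N × Fin N) A) :
    ptr2A (Z - W) = ptr2A Z - ptr2A W := by
  ext i j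
  simp [ptr2A, Finset.sum_sub_distrib]

lemma ptr2A_smul {N : ℕ} {A : Type} [Ring A] [Algebra ℂ A] (c : ℂ)
    (Z : Matrix (Fin N × Fin N) (Fin N × Fin N) A) :
    ptr2A (c • Z) = c • ptr2A Z := by
  ext i j
  simp [ptr2A, Finset.smul_sum]

/-- In the adjoint braided differential algebra, the R-traces `Tr_R(M^k)` are
central: they commute with every entry of `M` and every entry of `L`. -/
theorem rtrace_powers_central (N : ℕ) (hN : 1 ≤ N)
    (R Rinv Ψ : Matrix (Fin N × Fin N) (Fin N × Fin N) ℂ) (q : ℂ) (hq : q ≠ 0)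
    (hYB : up12 R * up23 R * up12 R = up23 R * up12 R * up23 R)
    (hRinv : R * Rinv = 1 ∧ Rinv * R = 1)
    (hHecke : (R - q • (1 : Matrix (Fin N × Fin N) (Fin N × Fin N) ℂ))
        * (R + q⁻¹ • (1 : Matrix (Fin N × Fin N) (Fin N × Fin N) ℂ)) = 0)
    (hskew : ptrMid (up12 R * up23 Ψ) = flip13 N ∧ ptrMid (up12 Ψ * up23 R) = flip13 N)
    (A : Type) [Ring A] [Algebra ℂ A] (L M : Matrix (Fin N) (Fin N) A)
    (hREM : R.map (algebraMap ℂ A) * lift1 M * R.map (algebraMap ℂ A) * lift1 M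
        = lift1 M * R.map (algebraMap ℂ A) * lift1 M * R.map (algebraMap ℂ A))
    (hREL : R.map (algebraMap ℂ A) * lift1 L * R.map (algebraMap ℂ A) * lift1 L
        = lift1 L * R.map (algebraMap ℂ A) * lift1 L * R.map (algebraMap ℂ A))
    (hOFP : R.map (algebraMap ℂ A) * lift1 L * R.map (algebraMap ℂ A) * lift1 M
        = lift1 M * R.map (algebraMap ℂ A) * lift1 L * R.map (algebraMap ℂ A)) :
    ∀ k : ℕ, 1 ≤ k → ∀ i j : Fin N,
      trR (Cmat Ψ) (M ^ k) * M i j = M i j * trR (Cmat Ψ) (M ^ k)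
      ∧ trR (Cmat Ψ) (M ^ k) * L i j = L i j * trR (Cmat Ψ) (M ^ k) := by
  intro k hk i j
  have φone : (1 : Matrix (Fin N × Fin N) (Fin N × Fin N) ℂ).map (algebraMap ℂ A) = 1 := by
    ext p r
    by_cases h : p = r <;> simp [Matrix.map_apply, Matrix.one_apply, h]
  have hSSi : R.map (algebraMap ℂ A) * Rinv.map (algebraMap ℂ A) = 1 := by
    rw [← Matrix.map_mul, hRinv.1, φone]
  have hSiS : Rinv.map (algebraMap ℂ A) * R.map (algebraMap ℂ A) = 1 := by
    rw [← Matrix.map_mul, hRinv.2, φone]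
  have hSiEq : Rinv.map (algebraMap ℂ A)
      = R.map (algebraMap ℂ A) - (q - q⁻¹) • 1 := by
    rw [rinv_eq R Rinv q hq hRinv hHecke]
    ext p r
    simp only [Matrix.map_apply, Matrix.sub_apply, Matrix.smul_apply, Matrix.one_apply,
      smul_eq_mul, _root_.map_sub, _root_.map_mul, apply_ite (algebraMap ℂ A),
      _root_.map_one, _root_.map_zero]
    simp [Algebra.smul_def]
  have base_M : Rinv.map (algebraMap ℂ A) * lift1 M * R.map (algebraMap ℂ A) * lift1 M
      = lift1 M * (R.map (algebraMap ℂ A) * lift1 M * Rinv.map (algebraMap ℂ A)) := by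
    have h : Rinv.map (algebraMap ℂ A)
          * (R.map (algebraMap ℂ A) * lift1 M * R.map (algebraMap ℂ A) * lift1 M)
          * Rinv.map (algebraMap ℂ A)
        = Rinv.map (algebraMap ℂ A)
          * (lift1 M * R.map (algebraMap ℂ A) * lift1 M * R.map (algebraMap ℂ A))
          * Rinv.map (algebraMap ℂ A) := by rw [hREM]
    have l1 : Rinv.map (algebraMap ℂ A)
          * (R.map (algebraMap ℂ A) * lift1 M * R.map (algebraMap ℂ A) * lift1 M)
          * Rinv.map (algebraMap ℂ A)
        = lift1 M * R.map (algebraMap ℂ A) * lift1 M * Rinv.map (algebraMap ℂ A) := by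
      have e : Rinv.map (algebraMap ℂ A)
            * (R.map (algebraMap ℂ A) * lift1 M * R.map (algebraMap ℂ A) * lift1 M)
            * Rinv.map (algebraMap ℂ A)
          = (Rinv.map (algebraMap ℂ A) * R.map (algebraMap ℂ A))
            * (lift1 M * R.map (algebraMap ℂ A) * lift1 M * Rinv.map (algebraMap ℂ A)) := by
        noncomm_ring
      rw [e, hSiS, one_mul]
    have l2 : Rinv.map (algebraMap ℂ A)
          * (lift1 M * R.map (algebraMap ℂ A) * lift1 M * R.map (algebraMap ℂ A))
          * Rinv.map (algebraMap ℂ A)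
        = Rinv.map (algebraMap ℂ A) * lift1 M * R.map (algebraMap ℂ A) * lift1 M := by
      have e : Rinv.map (algebraMap ℂ A)
            * (lift1 M * R.map (algebraMap ℂ A) * lift1 M * R.map (algebraMap ℂ A))
            * Rinv.map (algebraMap ℂ A)
          = (Rinv.map (algebraMap ℂ A) * lift1 M * R.map (algebraMap ℂ A) * lift1 M)
            * (R.map (algebraMap ℂ A) * Rinv.map (algebraMap ℂ A)) := by
        noncomm_ring
      rw [e, hSSi, mul_one]
    rw [l1, l2] at h
    rw [← h]
    noncomm_ring
  have base_L : Rinv.map (algebraMap ℂ A) * lift1 M * R.map (algebraMap ℂ A) * lift1 L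
      = lift1 L * (R.map (algebraMap ℂ A) * lift1 M * Rinv.map (algebraMap ℂ A)) := by
    have h : Rinv.map (algebraMap ℂ A)
          * (R.map (algebraMap ℂ A) * lift1 L * R.map (algebraMap ℂ A) * lift1 M)
          * Rinv.map (algebraMap ℂ A)
        = Rinv.map (algebraMap ℂ A)
          * (lift1 M * R.map (algebraMap ℂ A) * lift1 L * R.map (algebraMap ℂ A))
          * Rinv.map (algebraMap ℂ A) := by rw [hOFP]
    have l1 : Rinv.map (algebraMap ℂ A)
          * (R.map (algebraMap ℂ A) * lift1 L * R.map (algebraMap ℂ A) * lift1 M)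
          * Rinv.map (algebraMap ℂ A)
        = lift1 L * R.map (algebraMap ℂ A) * lift1 M * Rinv.map (algebraMap ℂ A) := by
      have e : Rinv.map (algebraMap ℂ A)
            * (R.map (algebraMap ℂ A) * lift1 L * R.map (algebraMap ℂ A) * lift1 M)
            * Rinv.map (algebraMap ℂ A)
          = (Rinv.map (algebraMap ℂ A) * R.map (algebraMap ℂ A))
            * (lift1 L * R.map (algebraMap ℂ A) * lift1 M * Rinv.map (algebraMap ℂ A)) := by
        noncomm_ring
      rw [e, hSiS, one_mul]
    have l2 : Rinv.map (algebraMap ℂ A)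
          * (lift1 M * R.map (algebraMap ℂ A) * lift1 L * R.map (algebraMap ℂ A))
          * Rinv.map (algebraMap ℂ A)
        = Rinv.map (algebraMap ℂ A) * lift1 M * R.map (algebraMap ℂ A) * lift1 L := by
      have e : Rinv.map (algebraMap ℂ A)
            * (lift1 M * R.map (algebraMap ℂ A) * lift1 L * R.map (algebraMap ℂ A))
            * Rinv.map (algebraMap ℂ A)
          = (Rinv.map (algebraMap ℂ A) * lift1 M * R.map (algebraMap ℂ A) * lift1 L)
            * (R.map (algebraMap ℂ A) * Rinv.map (algebraMap ℂ A)) := by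
        noncomm_ring
      rw [e, hSSi, mul_one]
    rw [l1, l2] at h
    rw [← h]
    noncomm_ring
  have final : ∀ N₀ : Matrix (Fin N) (Fin N) A,
      Rinv.map (algebraMap ℂ A) * lift1 (M ^ k) * R.map (algebraMap ℂ A) * lift1 N₀
        = lift1 N₀ * (R.map (algebraMap ℂ A) * lift1 (M ^ k) * Rinv.map (algebraMap ℂ A)) →
      trR (Cmat Ψ) (M ^ k) * N₀ i j = N₀ i j * trR (Cmat Ψ) (M ^ k) := by
    intro N₀ hrel
    rw [hSiEq] at hrel
    have hexp : R.map (algebraMap ℂ A) * lift1 (M ^ k) * R.map (algebraMap ℂ A) * lift1 N₀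
          - (q - q⁻¹) • (lift1 (M ^ k) * R.map (algebraMap ℂ A) * lift1 N₀)
        = lift1 N₀ * (R.map (algebraMap ℂ A) * lift1 (M ^ k) * R.map (algebraMap ℂ A))
          - (q - q⁻¹) • (lift1 N₀ * (R.map (algebraMap ℂ A) * lift1 (M ^ k))) := by
      calc R.map (algebraMap ℂ A) * lift1 (M ^ k) * R.map (algebraMap ℂ A) * lift1 N₀
            - (q - q⁻¹) • (lift1 (M ^ k) * R.map (algebraMap ℂ A) * lift1 N₀)
          = (R.map (algebraMap ℂ A) - (q - q⁻¹) • 1) * lift1 (M ^ k)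
              * R.map (algebraMap ℂ A) * lift1 N₀ := by
            simp only [Matrix.sub_mul, Matrix.smul_mul, one_mul]
        _ = lift1 N₀ * (R.map (algebraMap ℂ A) * lift1 (M ^ k)
              * (R.map (algebraMap ℂ A) - (q - q⁻¹) • 1)) := hrel
        _ = lift1 N₀ * (R.map (algebraMap ℂ A) * lift1 (M ^ k) * R.map (algebraMap ℂ A))
              - (q - q⁻¹) • (lift1 N₀ * (R.map (algebraMap ℂ A) * lift1 (M ^ k))) := by
            simp only [Matrix.mul_sub, Matrix.mul_smul, mul_one]
    have hF := congrArg (fun Z => ptr2A (CCA A Ψ * Z)) hexp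
    simp only [Matrix.mul_sub, Matrix.mul_smul, ptr2A_sub, ptr2A_smul] at hF
    have t4 := T4 R Ψ q hq hYB hHecke hskew.1 hskew.2 (M ^ k)
    have hT1 : ptr2A (CCA A Ψ * (R.map (algebraMap ℂ A) * lift1 (M ^ k)
          * R.map (algebraMap ℂ A) * lift1 N₀))
        = (trR (Cmat Ψ) (M ^ k) • 1 + (q - q⁻¹) • (M ^ k)) * N₀ := by
      rw [show CCA A Ψ * (R.map (algebraMap ℂ A) * lift1 (M ^ k)
            * R.map (algebraMap ℂ A) * lift1 N₀)
          = (CCA A Ψ * R.map (algebraMap ℂ A) * lift1 (M ^ k)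
            * R.map (algebraMap ℂ A)) * lift1 N₀ by noncomm_ring]
      rw [ptr2A_mul_lift, t4]
    have hT2 : ptr2A (CCA A Ψ * (lift1 (M ^ k) * R.map (algebraMap ℂ A) * lift1 N₀))
        = M ^ k * N₀ := by
      rw [show CCA A Ψ * (lift1 (M ^ k) * R.map (algebraMap ℂ A) * lift1 N₀)
          = (CCA A Ψ * lift1 (M ^ k)) * (R.map (algebraMap ℂ A) * lift1 N₀) by noncomm_ring]
      rw [CCA_comm_lift]
      rw [show lift1 (M ^ k) * CCA A Ψ * (R.map (algebraMap ℂ A) * lift1 N₀)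
          = lift1 (M ^ k) * (CCA A Ψ * R.map (algebraMap ℂ A) * lift1 N₀) by noncomm_ring]
      rw [ptr2A_lift_mul, T3 R Ψ hskew.1 N₀]
    have hT3' : ptr2A (CCA A Ψ * (lift1 N₀ * (R.map (algebraMap ℂ A) * lift1 (M ^ k)
          * R.map (algebraMap ℂ A))))
        = N₀ * (trR (Cmat Ψ) (M ^ k) • 1 + (q - q⁻¹) • (M ^ k)) := by
      rw [show CCA A Ψ * (lift1 N₀ * (R.map (algebraMap ℂ A) * lift1 (M ^ k)
            * R.map (algebraMap ℂ A)))
          = (CCA A Ψ * lift1 N₀) * (R.map (algebraMap ℂ A) * lift1 (M ^ k)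
            * R.map (algebraMap ℂ A)) by noncomm_ring]
      rw [CCA_comm_lift]
      rw [show lift1 N₀ * CCA A Ψ * (R.map (algebraMap ℂ A) * lift1 (M ^ k)
            * R.map (algebraMap ℂ A))
          = lift1 N₀ * (CCA A Ψ * R.map (algebraMap ℂ A) * lift1 (M ^ k)
            * R.map (algebraMap ℂ A)) by noncomm_ring]
      rw [ptr2A_lift_mul, t4]
    have hT4' : ptr2A (CCA A Ψ * (lift1 N₀ * (R.map (algebraMap ℂ A) * lift1 (M ^ k))))
        = N₀ * (M ^ k) := by
      rw [show CCA A Ψ * (lift1 N₀ * (R.map (algebraMap ℂ A) * lift1 (M ^ k)))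
          = (CCA A Ψ * lift1 N₀) * (R.map (algebraMap ℂ A) * lift1 (M ^ k)) by noncomm_ring]
      rw [CCA_comm_lift]
      rw [show lift1 N₀ * CCA A Ψ * (R.map (algebraMap ℂ A) * lift1 (M ^ k))
          = lift1 N₀ * (CCA A Ψ * R.map (algebraMap ℂ A) * lift1 (M ^ k)) by noncomm_ring]
      rw [ptr2A_lift_mul, T3 R Ψ hskew.1 (M ^ k)]
    rw [hT1, hT2, hT3', hT4'] at hF
    have hmain : (trR (Cmat Ψ) (M ^ k) • (1 : Matrix (Fin N) (Fin N) A)) * N₀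
        = N₀ * (trR (Cmat Ψ) (M ^ k) • 1) := by
      have expand1 : (trR (Cmat Ψ) (M ^ k) • (1 : Matrix (Fin N) (Fin N) A)
            + (q - q⁻¹) • (M ^ k)) * N₀ - (q - q⁻¹) • (M ^ k * N₀)
          = (trR (Cmat Ψ) (M ^ k) • (1 : Matrix (Fin N) (Fin N) A)) * N₀ := by
        have e : ((q - q⁻¹) • (M ^ k)) * N₀ = (q - q⁻¹) • (M ^ k * N₀) :=
          Matrix.smul_mul _ _ _
        rw [Matrix.add_mul, e, add_sub_cancel_right]
      have expand2 : N₀ * (trR (Cmat Ψ) (M ^ k) • (1 : Matrix (Fin N) (Fin N) A)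
            + (q - q⁻¹) • (M ^ k)) - (q - q⁻¹) • (N₀ * M ^ k)
          = N₀ * (trR (Cmat Ψ) (M ^ k) • 1) := by
        have e : N₀ * ((q - q⁻¹) • (M ^ k)) = (q - q⁻¹) • (N₀ * M ^ k) :=
          Matrix.mul_smul _ _ _
        rw [Matrix.mul_add, e, add_sub_cancel_right]
      rw [← expand1, ← expand2, hF]
    have := congrFun (congrFun hmain i) j
    simpa [Matrix.mul_apply, Matrix.smul_apply, Matrix.one_apply, mul_ite, ite_mul,
      mul_zero, zero_mul, mul_one, one_mul, smul_eq_mul, Finset.sum_ite_eq,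
      Finset.sum_ite_eq'] using this
  constructor
  · refine final M ?_
    rw [lift1_pow]
    exact comm_aux (R.map (algebraMap ℂ A)) (Rinv.map (algebraMap ℂ A))
      (lift1 M) (lift1 M) hSSi hSiS base_M k
  · refine final L ?_
    rw [lift1_pow]
    exact comm_aux (R.map (algebraMap ℂ A)) (Rinv.map (algebraMap ℂ A))
      (lift1 M) (lift1 L) hSSi hSiS base_L k
end

section
/- Let m ≥ 1 and η₀ ∈ ℂ, and for 1 ≤ i,j ≤ m let κ_i^j be the derivation of the polynomial algebra ℂ[x₁,…,x_m] given by κ_i^j = x_i·∂/∂x_j + η₀·δ_i^j·Σ_{k=1}^m x_k·∂/∂x_k. Then: (a) these derivations realize the Lie algebra gl(m): ⁅κ_i^j, κ_k^l⁆ = δ_k^j·κ_i^l − δ_i^l·κ_k^j for all i,j,k,l; (b) as ℂ-linear operators on ℂ[x₁,…,x_m], the commutator with multiplication operators satisfies κ_i^j∘M_{x_p} − M_{x_p}∘κ_i^j = δ_p^j·M_{x_i} + η₀·δ_i^j·M_{x_p} for all i,j,p, where M_g denotes multiplication by the polynomial g. -/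
open MvPolynomial BigOperators

/-- The vector field `κ_i^j = x_i ∂/∂x_j + η₀ δ_i^j Σ_k x_k ∂/∂x_k` acting on
the polynomial algebra `ℂ[x₁,…,x_m]`. -/
noncomputable def kappaGL (m : ℕ) (η₀ : ℂ) (i j : Fin m) :
    Module.End ℂ (MvPolynomial (Fin m) ℂ) :=
  LinearMap.mulLeft ℂ (X i) ∘ₗ (pderiv j).toLinearMap
    + (if i = j then η₀ else 0) •
        ∑ k : Fin m, LinearMap.mulLeft ℂ (X k) ∘ₗ (pderiv k).toLinearMap

private lemma pderiv_comm' {m : ℕ} (i j : Fin m) (f : MvPolynomial (Fin m) ℂ) :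
    pderiv i (pderiv j f) = pderiv j (pderiv i f) := by
  induction f using MvPolynomial.induction_on with
  | C a => simp
  | add p q hp hq => simp [hp, hq]
  | mul_X p k hp =>
    simp [pderiv_mul, pderiv_X, hp, Pi.single_apply]
    split_ifs <;> (try simp only [map_zero, add_zero, zero_add]) <;> ring

noncomputable def Dop (m : ℕ) (i j : Fin m) : Module.End ℂ (MvPolynomial (Fin m) ℂ) :=
  LinearMap.mulLeft ℂ (X i) ∘ₗ (pderiv j).toLinearMap

lemma Dop_comm (m : ℕ) (i j k l : Fin m) :
    Dop m i j ∘ₗ Dop m k l - Dop m k l ∘ₗ Dop m i j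
      = (if k = j then (1 : ℂ) else 0) • Dop m i l
        - (if i = l then (1 : ℂ) else 0) • Dop m k j := by
  refine LinearMap.ext fun f => ?_
  simp only [Dop, LinearMap.sub_apply, LinearMap.comp_apply, Derivation.coeFn_coe,
    LinearMap.mulLeft_apply, LinearMap.smul_apply, pderiv_mul, pderiv_X, Pi.single_apply, smul_eq_mul]
  rw [pderiv_comm' j l f]
  split_ifs with h1 h2 h2 <;>
    (try subst h1) <;> (try subst h2) <;> simp <;> ring

lemma Dop_mul (m : ℕ) (i j p : Fin m) :
    Dop m i j ∘ₗ LinearMap.mulLeft ℂ (X p)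
      - LinearMap.mulLeft ℂ (X p) ∘ₗ Dop m i j
      = (if p = j then (1 : ℂ) else 0) • LinearMap.mulLeft ℂ (X i) := by
  refine LinearMap.ext fun f => ?_
  simp only [Dop, LinearMap.sub_apply, LinearMap.comp_apply, Derivation.coeFn_coe,
    LinearMap.mulLeft_apply, LinearMap.smul_apply, pderiv_mul, pderiv_X, Pi.single_apply, smul_eq_mul]
  split_ifs with h1 <;> (try subst h1) <;> simp <;> ring

noncomputable def Eop (m : ℕ) : Module.End ℂ (MvPolynomial (Fin m) ℂ) :=
  ∑ k : Fin m, Dop m k k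

lemma Eop_comm (m : ℕ) (a b : Fin m) :
    Eop m * Dop m a b = Dop m a b * Eop m := by
  have h : Eop m * Dop m a b - Dop m a b * Eop m = 0 := by
    rw [Eop, Finset.sum_mul, Finset.mul_sum, ← Finset.sum_sub_distrib]
    have key : ∀ k : Fin m, Dop m k k * Dop m a b - Dop m a b * Dop m k k
        = (if a = k then (1 : ℂ) else 0) • Dop m k b
          - (if k = b then (1 : ℂ) else 0) • Dop m a k := fun k => Dop_comm m k k a b
    simp only [key]
    rw [Finset.sum_sub_distrib]
    simp
  exact sub_eq_zero.mp h

lemma Eop_mul (m : ℕ) (p : Fin m) :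
    Eop m * LinearMap.mulLeft ℂ (X p)
      - LinearMap.mulLeft ℂ (X p) * Eop m = LinearMap.mulLeft ℂ (X p) := by
  rw [Eop, Finset.sum_mul, Finset.mul_sum, ← Finset.sum_sub_distrib]
  have key : ∀ k : Fin m, Dop m k k * LinearMap.mulLeft ℂ (X p)
      - LinearMap.mulLeft ℂ (X p) * Dop m k k
      = (if p = k then (1 : ℂ) else 0) • LinearMap.mulLeft ℂ (X k) :=
    fun k => Dop_mul m k k p
  simp only [key]
  simp

lemma kappaGL_eq (m : ℕ) (η₀ : ℂ) (i j : Fin m) :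
    kappaGL m η₀ i j = Dop m i j + (if i = j then η₀ else 0) • Eop m := rfl

/-- (a) The operators `κ_i^j` realize the Lie algebra `gl(m)`:
`⁅κ_i^j, κ_k^l⁆ = δ_k^j κ_i^l − δ_i^l κ_k^j`;
(b) the commutator with multiplication operators satisfies
`κ_i^j ∘ M_{x_p} − M_{x_p} ∘ κ_i^j = δ_p^j M_{x_i} + η₀ δ_i^j M_{x_p}`. -/
theorem kappaGL_relations (m : ℕ) (hm : 1 ≤ m) (η₀ : ℂ) :
    (∀ i j k l : Fin m,
      kappaGL m η₀ i j ∘ₗ kappaGL m η₀ k l - kappaGL m η₀ k l ∘ₗ kappaGL m η₀ i j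
        = (if k = j then (1 : ℂ) else 0) • kappaGL m η₀ i l
          - (if i = l then (1 : ℂ) else 0) • kappaGL m η₀ k j)
    ∧ (∀ i j p : Fin m,
      kappaGL m η₀ i j ∘ₗ LinearMap.mulLeft ℂ (X p)
          - LinearMap.mulLeft ℂ (X p) ∘ₗ kappaGL m η₀ i j
        = (if p = j then (1 : ℂ) else 0) • LinearMap.mulLeft ℂ (X i)
          + (if i = j then η₀ else 0) • LinearMap.mulLeft ℂ (X p)) := by
  constructor
  · intro i j k l
    rw [← Module.End.mul_eq_comp, ← Module.End.mul_eq_comp]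
    rw [kappaGL_eq, kappaGL_eq, kappaGL_eq, kappaGL_eq]
    set A := Dop m i j
    set B := Dop m k l
    set A' := Dop m i l
    set B' := Dop m k j
    set E := Eop m
    have hD : A * B = ((if k = j then (1 : ℂ) else 0) • A'
        - (if i = l then (1 : ℂ) else 0) • B') + B * A := by
      rw [← Dop_comm m i j k l, Module.End.mul_eq_comp, Module.End.mul_eq_comp]; abel
    have hEB : E * B = B * E := Eop_comm m k l
    have hEA : E * A = A * E := Eop_comm m i j
    have hs : ((if k = j then (1 : ℂ) else 0) * (if i = l then η₀ else 0)) • E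
        = ((if i = l then (1 : ℂ) else 0) * (if k = j then η₀ else 0)) • E := by
      congr 1; split_ifs <;> ring
    rw [add_mul, mul_add, mul_add, add_mul, mul_add, mul_add, hD]
    simp only [smul_mul_assoc, mul_smul_comm, smul_smul]
    rw [hEB, hEA]
    rw [smul_add, smul_add, smul_smul, smul_smul, hs]
    module
  · intro i j p
    rw [← Module.End.mul_eq_comp, ← Module.End.mul_eq_comp, kappaGL_eq]
    have hD : Dop m i j * LinearMap.mulLeft ℂ (X p)
        = (if p = j then (1 : ℂ) else 0) • LinearMap.mulLeft ℂ (X i)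
          + LinearMap.mulLeft ℂ (X p) * Dop m i j := by
      rw [← Dop_mul m i j p, Module.End.mul_eq_comp, Module.End.mul_eq_comp]; abel
    have hE : Eop m * LinearMap.mulLeft ℂ (X p)
        = LinearMap.mulLeft ℂ (X p) + LinearMap.mulLeft ℂ (X p) * Eop m := by
      exact sub_eq_iff_eq_add.mp (Eop_mul m p)
    rw [add_mul, mul_add, hD, smul_mul_assoc, hE, mul_smul_comm]
    rw [smul_add]
    module
end
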